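/- Let X be a Bousfield-Segal space and let μ₂ be a section of the acyclic Kan fibration β₂ = c₂\X, with fraction operation defined on vertices by f/g := d₀(μ₂(f,g)). Then for all vertices x, y, z of X₀ the fraction operation restricts to a map X₁(x,y) × X₁(x,z) → X₁(z,y) on hom-spaces, and, writing v ∼ w for equality of classes in π₀: (1) f/f ∼ 1_y for every vertex f of X₁(x,y); (2) f/1_x ∼ f for every vertex f of X₁(x,y); (3) f/g ∼ (f/h)/(g/h) for every triple (f,g,h) of vertices of X₁ with d₁f = d₁g = d₁h. -/

import Mathlib

open CategoryTheory CategoryTheory.GrothendieckTopology CategoryTheory.Limits Simplicial SSet Opposite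

noncomputable section

namespace BousfieldPaper

/-! ## Basic lifting-property classes of simplicial sets -/

/-- A Kan fibration: a map with the right lifting property against all horn inclusions. -/
def KanFibration {S T : SSet.{0}} (p : S ⟶ T) : Prop :=
  ∀ (n : ℕ) (i : Fin (n + 2)), HasLiftingProperty (Λ[n + 1, i].ι) p

/-- An acyclic (trivial) Kan fibration: a map with the right lifting property against
all boundary inclusions. -/
def TrivialKanFibration {S T : SSet.{0}} (p : S ⟶ T) : Prop :=
  ∀ n : ℕ, HasLiftingProperty (∂Δ[n].ι) p

/-- The class of maps with the right lifting property against every map in `T`. -/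
def rlpOf {C : Type*} [Category C] (T : MorphismProperty C) : MorphismProperty C :=
  fun _ _ p => ∀ ⦃A B : C⦄ (i : A ⟶ B), T i → HasLiftingProperty i p

/-- The class of maps with the left lifting property against every map in `T`. -/
def llpOf {C : Type*} [Category C] (T : MorphismProperty C) : MorphismProperty C :=
  fun _ _ i => ∀ ⦃S T' : C⦄ (p : S ⟶ T'), T p → HasLiftingProperty i p

/-- The saturation `llp(rlp(S))` of a class of maps. -/
def saturationOf {C : Type*} [Category C] (S : MorphismProperty C) : MorphismProperty C :=
  llpOf (rlpOf S)

/-- The class of all horn inclusions (up to isomorphism of arrows). -/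
def HornClass : MorphismProperty SSet.{0} := fun _ _ f =>
  ∃ (n : ℕ) (i : Fin (n + 2)), Nonempty (Arrow.mk f ≅ Arrow.mk (Λ[n + 1, i].ι))

/-- The class of left horn inclusions `Λ[n,0] → Δ[n]`, `n ≥ 2` (up to isomorphism of arrows). -/
def LeftHornClass : MorphismProperty SSet.{0} := fun _ _ f =>
  ∃ n : ℕ, 2 ≤ n ∧ Nonempty (Arrow.mk f ≅ Arrow.mk (Λ[n, 0].ι))

/-- Anodyne maps: the saturation of the class of horn inclusions. -/
def Anodyne : MorphismProperty SSet.{0} := saturationOf HornClass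

/-- A weak homotopy equivalence of simplicial sets (in the Kan--Quillen sense):
a map admitting a factorization as an anodyne map followed by an acyclic Kan fibration. -/
def WeakHomotopyEquivalence {S T : SSet.{0}} (f : S ⟶ T) : Prop :=
  ∃ (Z : SSet.{0}) (i : S ⟶ Z) (p : Z ⟶ T),
    Anodyne i ∧ TrivialKanFibration p ∧ i ≫ p = f

/-! ## Saturated classes -/

/-- `f` is a retract of `g` in the arrow category. -/
def IsRetractOf {C : Type*} [Category C] {X Y X' Y' : C} (f : X ⟶ Y) (g : X' ⟶ Y') : Prop :=
  ∃ (i : Arrow.mk f ⟶ Arrow.mk g) (r : Arrow.mk g ⟶ Arrow.mk f), i ≫ r = 𝟙 _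

/-- The inclusion functor of the subposet `{x | x < j}` of `J`. -/
def iioFunctor {J : Type} [Preorder J] (j : J) : Set.Iio j ⥤ J :=
  Monotone.functor (f := fun x => (x : J)) (fun _ _ h => h)

/-- The cocone on the restriction of `F : J ⥤ C` to `{x | x < j}` with apex `F.obj j`. -/
def coconeBelow {J : Type} [Preorder J] {C : Type*} [Category C]
    (F : J ⥤ C) (j : J) : Cocone (iioFunctor j ⋙ F) where
  pt := F.obj j
  ι :=
    { app := fun x => F.map (homOfLE (le_of_lt x.2))
      naturality := fun x y g => by
        dsimp [iioFunctor, Monotone.functor]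
        rw [← F.map_comp, Category.comp_id]
        congr 1 }

/-- A class of morphisms of simplicial sets is *saturated* (weakly saturated) if it is closed
under pushouts (cobase change), retracts and transfinite compositions. -/
structure IsSaturated (A : MorphismProperty SSet.{0}) : Prop where
  pushout : ∀ ⦃X Y X' Y' : SSet.{0}⦄ (f : X ⟶ Y) (u : X ⟶ X') (v : Y ⟶ Y') (f' : X' ⟶ Y'),
    IsPushout f u v f' → A f → A f'
  retract : ∀ ⦃X Y X' Y' : SSet.{0}⦄ (f : X ⟶ Y) (g : X' ⟶ Y'),
    IsRetractOf f g → A g → A f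
  transfinite : ∀ (J : Type) (_ : LinearOrder J) (_ : SuccOrder J) (_ : OrderBot J)
    (_ : WellFoundedLT J) (F : J ⥤ SSet.{0}) (c : Cocone F) (_ : IsColimit c),
    (∀ j : J, ¬IsMax j → A (F.map (homOfLE (Order.le_succ j)))) →
    (∀ j : J, Order.IsSuccLimit j → Nonempty (IsColimit (coconeBelow F j))) →
    A (c.ι.app ⊥)

/-- Right cancellation property for monomorphisms. -/
def RightCancel (A : MorphismProperty SSet.{0}) : Prop :=
  ∀ ⦃X Y Z : SSet.{0}⦄ (u : X ⟶ Y) (v : Y ⟶ Z),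
    Mono u → Mono v → A (u ≫ v) → A u → A v

/-- Left cancellation property for monomorphisms. -/
def LeftCancel (A : MorphismProperty SSet.{0}) : Prop :=
  ∀ ⦃X Y Z : SSet.{0}⦄ (u : X ⟶ Y) (v : Y ⟶ Z),
    Mono u → Mono v → A (u ≫ v) → A v → A u

/-- 3-for-2 for monomorphisms: both left and right cancellation. -/
def ThreeForTwo (A : MorphismProperty SSet.{0}) : Prop :=
  RightCancel A ∧ LeftCancel A

/-! ## The left cone, the spine, and related subcomplexes of the standard simplex -/

/-- The left cone `C n ⊆ Δ[n]`: the union of the images of the initial edges `0 → i`. -/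
def coneSub (n : ℕ) : Subfunctor Δ[n] where
  obj m := {α | ∃ i : ℕ, 1 ≤ i ∧ i ≤ n ∧
    ∀ j, (stdSimplex.asOrderHom α j : ℕ) = 0 ∨ (stdSimplex.asOrderHom α j : ℕ) = i}
  map := by
    rintro m m' g α ⟨i, hi1, hin, h⟩
    exact ⟨i, hi1, hin, fun j => h _⟩

/-- The spine `Sp n ⊆ Δ[n]`: the union of the images of the edges `i → i+1`. -/
def spineSub (n : ℕ) : Subfunctor Δ[n] where
  obj m := {α | ∃ i : ℕ, i + 1 ≤ n ∧
    ∀ j, (stdSimplex.asOrderHom α j : ℕ) = i ∨ (stdSimplex.asOrderHom α j : ℕ) = i + 1}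
  map := by
    rintro m m' g α ⟨i, hi, h⟩
    exact ⟨i, hi, fun j => h _⟩

/-- The union `(SpC) n ⊆ Δ[n]` of the images of the `2`-simplices `{0, i, i+1}`, `0 < i < n`. -/
def spcSub (n : ℕ) : Subfunctor Δ[n] where
  obj m := {α | ∃ i : ℕ, 0 < i ∧ i + 1 ≤ n ∧
    ∀ j, (stdSimplex.asOrderHom α j : ℕ) = 0 ∨ (stdSimplex.asOrderHom α j : ℕ) = i ∨ (stdSimplex.asOrderHom α j : ℕ) = i + 1}
  map := by
    rintro m m' g α ⟨i, h₀, h₁, h⟩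
    exact ⟨i, h₀, h₁, fun j => h _⟩

/-- The canonical inclusion `k n : C n → Λ[n, 0]` of the left cone into the left horn. -/
def coneToHorn (n : ℕ) (hn : 2 ≤ n) : ((coneSub n).toFunctor : SSet.{0}) ⟶ Λ[n, 0] where
  app m := ↾fun α => by
    refine ⟨α.1, ?_⟩
    obtain ⟨i, hi1, hin, h⟩ := α.2
    intro hu
    rw [Set.eq_univ_iff_forall] at hu
    obtain ⟨kv, hkv0, hkvi, hkvlt⟩ : ∃ kv : ℕ, kv ≠ 0 ∧ kv ≠ i ∧ kv < n + 1 := by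
      rcases eq_or_ne i 1 with hc | hc
      · exact ⟨2, by omega, by omega, by omega⟩
      · exact ⟨1, by omega, by omega, by omega⟩
    rcases hu ⟨kv, hkvlt⟩ with hr | h0
    · obtain ⟨j, hj⟩ := hr
      have hval := congrArg Fin.val hj
      rcases h j with h' | h' <;> simp_all
    · have := congrArg Fin.val (Set.mem_singleton_iff.1 h0)
      simp_all

/-- The nerve `IΔ^n` of the free groupoid (codiscrete groupoid) on `{0, …, n}`:
its `m`-simplices are all (not necessarily monotone) functions `Fin (m+1) → Fin (n+1)`. -/
def IDelta (n : ℕ) : SSet.{0} where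
  obj m := Fin (m.unop.len + 1) → Fin (n + 1)
  map f := ↾fun α => α ∘ f.unop.toOrderHom

/-- The canonical inclusion `Δ[n] → IΔ^n`. -/
def iDeltaIncl (n : ℕ) : (Δ[n] : SSet.{0}) ⟶ IDelta n where
  app m := ↾fun α => ⇑(stdSimplex.asOrderHom α)

/-- The vertex `k : Δ[0] → IΔ^n`. -/
def iDeltaVertex (n : ℕ) (k : Fin (n + 1)) : (Δ[0] : SSet.{0}) ⟶ IDelta n where
  app m := ↾fun _ => fun _ => k


/-! ## Bisimplicial sets, the box product and the slash construction -/

/-- Bisimplicial sets: presheaves of sets on `Δ × Δ`. -/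
abbrev BSSet : Type 1 := (SimplexCategory × SimplexCategory)ᵒᵖ ⥤ Type

/-- The box product `A □ B` of two simplicial sets: `(A □ B)_{n,m} = A_n × B_m`. -/
def box (A B : SSet.{0}) : BSSet where
  obj nm := A.obj (op nm.unop.1) × B.obj (op nm.unop.2)
  map f := ↾fun p => ⟨A.map f.unop.1.op p.1, B.map f.unop.2.op p.2⟩

/-- The box product, functorially in its second variable. -/
def boxFunctor (A : SSet.{0}) : SSet.{0} ⥤ BSSet where
  obj B := box A B
  map g :=
    { app := fun nm => ↾fun p => ⟨p.1, g.app _ p.2⟩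
      naturality := fun nm nm' f => by
        ext p
        exact Prod.ext rfl (NatTrans.naturality_apply g f.unop.2.op p.2 :) }

/-- The box product is natural in its first variable. -/
def boxHomLeft {A A' : SSet.{0}} (f : A ⟶ A') (B : SSet.{0}) :
    (boxFunctor A).obj B ⟶ (boxFunctor A').obj B where
  app nm := ↾fun p => ⟨f.app _ p.1, p.2⟩
  naturality nm nm' g := by
    ext p
    exact Prod.ext (NatTrans.naturality_apply f g.unop.1.op p.1 :) rfl

lemma boxHomLeft_natural {A A' : SSet.{0}} (f : A ⟶ A') {B B' : SSet.{0}} (g : B ⟶ B') :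
    (boxFunctor A).map g ≫ boxHomLeft f B' = boxHomLeft f B ≫ (boxFunctor A').map g := rfl

/-- The simplicial set `A \ X` with `m`-simplices the bisimplicial maps `A □ Δ[m] → X`. -/
def slash (A : SSet.{0}) (X : BSSet) : SSet.{0} :=
  SSet.stdSimplex.op ⋙ ((boxFunctor A).op ⋙ yoneda.obj X)

/-- Functoriality (contravariance) of `A \ X` in `A`. -/
def slashMap {A A' : SSet.{0}} (f : A ⟶ A') (X : BSSet) : slash A' X ⟶ slash A X :=
  Functor.whiskerLeft SSet.stdSimplex.op
    (Functor.whiskerRight (NatTrans.op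
      { app := fun B => boxHomLeft f B
        naturality := fun _ _ g => (boxHomLeft_natural f g).symm }) (yoneda.obj X))

lemma slashMap_id (A : SSet.{0}) (X : BSSet) : slashMap (𝟙 A) X = 𝟙 (slash A X) := rfl

lemma slashMap_comp {A A' A'' : SSet.{0}} (f : A ⟶ A') (g : A' ⟶ A'') (X : BSSet) :
    slashMap (f ≫ g) X = slashMap g X ≫ slashMap f X := rfl


/-! ## Columns, Reedy fibrancy, Segal and Bousfield maps -/

/-- The `n`-th column `X_n := Δ[n] \ X` of a bisimplicial set. -/
def col (n : ℕ) (X : BSSet) : SSet.{0} := slash Δ[n] X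

/-- The face map `d_i : X_{n+1} → X_n` between columns. -/
def colδ {n : ℕ} (i : Fin (n + 2)) (X : BSSet) : col (n + 1) X ⟶ col n X :=
  slashMap (SSet.stdSimplex.map (SimplexCategory.δ i)) X

/-- The degeneracy map `s_i : X_n → X_{n+1}` between columns. -/
def colσ {n : ℕ} (i : Fin (n + 1)) (X : BSSet) : col n X ⟶ col (n + 1) X :=
  slashMap (SSet.stdSimplex.map (SimplexCategory.σ i)) X

/-- A bisimplicial set is `v`-fibrant (Reedy fibrant) if `f \ X` is a Kan fibration for
every monomorphism `f` of simplicial sets. -/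
def VFibrant (X : BSSet) : Prop :=
  ∀ ⦃A B : SSet.{0}⦄ (f : A ⟶ B), Mono f → KanFibration (slashMap f X)

/-- The `n`-th Bousfield map `β_n = c_n \ X : X_n → C_n \ X`. -/
def bousfieldMap (n : ℕ) (X : BSSet) : col n X ⟶ slash (coneSub n).toFunctor X :=
  slashMap (coneSub n).ι X

/-- The `n`-th Segal map `ξ_n = sp_n \ X : X_n → Sp_n \ X`. -/
def segalMap (n : ℕ) (X : BSSet) : col n X ⟶ slash (spineSub n).toFunctor X :=
  slashMap (spineSub n).ι X

/-- A Bousfield-Segal space: a `v`-fibrant bisimplicial set whose Bousfield maps `β_n`,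
`n ≥ 2`, are weak homotopy equivalences. -/
def IsBSegal (X : BSSet) : Prop :=
  VFibrant X ∧ ∀ n : ℕ, 2 ≤ n → WeakHomotopyEquivalence (bousfieldMap n X)

/-- A Segal space: a `v`-fibrant bisimplicial set whose Segal maps `ξ_n`,
`n ≥ 2`, are weak homotopy equivalences. -/
def IsSegal (X : BSSet) : Prop :=
  VFibrant X ∧ ∀ n : ℕ, 2 ≤ n → WeakHomotopyEquivalence (segalMap n X)

/-- The map `IΔ^1 \ X → X_0` induced by the vertex `{0} : Δ[0] → IΔ^1`. -/
def completenessMap (X : BSSet) : slash (IDelta 1) X ⟶ col 0 X :=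
  slashMap (iDeltaVertex 1 0) X

/-- A complete Bousfield-Segal space. -/
def IsCompleteBSegal (X : BSSet) : Prop :=
  IsBSegal X ∧ WeakHomotopyEquivalence (completenessMap X)

/-- A bisimplicial set is homotopically constant if every map of the simplex category
induces a weak homotopy equivalence between the corresponding columns. -/
def HomotopicallyConstant (X : BSSet) : Prop :=
  ∀ ⦃a b : SimplexCategory⦄ (f : a ⟶ b),
    WeakHomotopyEquivalence (slashMap (SSet.stdSimplex.map f) X)

/-! ## Vertices, edges and the fraction operation -/

/-- The vertices of a simplicial set. -/
def vert (S : SSet.{0}) : Type := S.obj (op (SimplexCategory.mk 0))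

/-- Two vertices of a simplicial set lie in the same connected component, i.e. they have
equal classes in `π₀`. -/
def hSim (S : SSet.{0}) (a b : vert S) : Prop :=
  Relation.EqvGen (fun v w : vert S => ∃ e : S.obj (op (SimplexCategory.mk 1)),
    SimplicialObject.δ S 1 e = v ∧ SimplicialObject.δ S 0 e = w) a b

/-- The edge `0 → i` of the left cone `C n`. -/
def coneEdge (n : ℕ) (i : Fin (n + 1)) (hi : i ≠ 0) :
    (Δ[1] : SSet.{0}) ⟶ (coneSub n).toFunctor where
  app m := ↾fun β => by
    refine ⟨(SSet.stdSimplex.map (SimplexCategory.mkOfLe 0 i (Fin.zero_le i))).app m β, ?_⟩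
    have hne : (i : ℕ) ≠ 0 := fun h => hi (by apply Fin.ext; simpa using h)
    refine ⟨(i : ℕ), by omega, i.is_le, fun j => ?_⟩
    have key : ∀ k : Fin 2,
        (((SimplexCategory.mkOfLe (0 : Fin (n + 1)) i (Fin.zero_le i)).toOrderHom k : Fin (n+1)) : ℕ) = 0 ∨
        (((SimplexCategory.mkOfLe (0 : Fin (n + 1)) i (Fin.zero_le i)).toOrderHom k : Fin (n+1)) : ℕ) = i := by
      intro k
      match k with
      | 0 => left; rfl
      | 1 => right; rfl
    exact key _
  naturality m m' g := by
    ext β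
    apply Subtype.ext
    exact NatTrans.naturality_apply (SSet.stdSimplex.map
      (SimplexCategory.mkOfLe 0 i (Fin.zero_le i))) g β

variable (X : BSSet)

/-- Vertex component of the restriction along the edge `0 → 2` of `C₂` (the "numerator"). -/
def eF (w : vert (slash (coneSub 2).toFunctor X)) : vert (col 1 X) :=
  (slashMap (coneEdge 2 2 (by decide)) X).app _ w

/-- Vertex component of the restriction along the edge `0 → 1` of `C₂` (the "denominator"). -/
def eG (w : vert (slash (coneSub 2).toFunctor X)) : vert (col 1 X) :=
  (slashMap (coneEdge 2 1 (by decide)) X).app _ w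

/-- Vertex component of the face map `d_i : X_1 → X_0`. -/
def dV (i : Fin 2) (f : vert (col 1 X)) : vert (col 0 X) := (colδ i X).app _ f

/-- Vertex component of the degeneracy `s_0 : X_0 → X_1`; `oneV X x` is `1_x`. -/
def oneV (x : vert (col 0 X)) : vert (col 1 X) := (colσ 0 X).app _ x

/-- The fraction operation determined by a section `μ₂` of the Bousfield map `β₂`:
`f/g := d₀ (μ₂ (f, g))`. -/
def fracV (μ₂ : slash (coneSub 2).toFunctor X ⟶ col 2 X)
    (w : vert (slash (coneSub 2).toFunctor X)) : vert (col 1 X) :=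
  (colδ 0 X).app _ (μ₂.app _ w)

lemma dV_oneV (x : vert (col 0 X)) (i : Fin 2) : dV X i (oneV X x) = x := by
  have h : colσ (0 : Fin 1) X ≫ colδ i X = 𝟙 (col 0 X) := by
    erw [colδ, colσ, ← slashMap_comp, ← Functor.map_comp]
    have : SimplexCategory.δ i ≫ SimplexCategory.σ (0 : Fin 1) = 𝟙 (SimplexCategory.mk 0) := by
      fin_cases i
      · exact SimplexCategory.δ_comp_σ_self
      · exact SimplexCategory.δ_comp_σ_succ
    erw [this, CategoryTheory.Functor.map_id, slashMap_id]; rfl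
  exact ConcreteCategory.congr_hom (congrArg (fun (t : col 0 X ⟶ col 0 X) => t.app (op (SimplexCategory.mk 0)))
    h) x

/-- The identity morphism `1_x` as an element of the hom-space `X₁(x,x)`. -/
def idHom (x : vert (col 0 X)) :
    {f : vert (col 1 X) // dV X 1 f = x ∧ dV X 0 f = x} :=
  ⟨oneV X x, dV_oneV X x 1, dV_oneV X x 0⟩


/-! ## Cellularity, pushouts of coproducts, finite compositions of pushouts -/

/-- `f` is a pushout (cobase change) of `g`. -/
def IsPushoutOf {C : Type*} [Category C] {A B X Y : C} (g : A ⟶ B) (f : X ⟶ Y) : Prop :=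
  ∃ (u : A ⟶ X) (v : B ⟶ Y), IsPushout g u v f

/-- `f` is a pushout of a coproduct of maps belonging to the class `S`. -/
def IsPushoutOfCoproductOf (S : MorphismProperty SSet.{0}) {P Q : SSet.{0}} (f : P ⟶ Q) : Prop :=
  ∃ (ι : Type) (A B : ι → SSet.{0}) (g : ∀ i, A i ⟶ B i),
    (∀ i, S (g i)) ∧
      IsPushoutOf (Limits.Sigma.desc (fun i => g i ≫ Limits.Sigma.ι B i) : (∐ A) ⟶ (∐ B)) f

/-- `f` is cellular with respect to the class `S`: it is a (transfinite, here `ℕ`-indexed)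
composition of pushouts of coproducts of maps of `S`. -/
def IsCellularIn (S : MorphismProperty SSet.{0}) {X Y : SSet.{0}} (f : X ⟶ Y) : Prop :=
  ∃ (F : ℕ ⥤ SSet.{0}) (c : Cocone F) (_ : IsColimit c) (e₀ : F.obj 0 ≅ X) (e : c.pt ≅ Y),
    (∀ m : ℕ, IsPushoutOfCoproductOf S (F.map (homOfLE (Nat.le_succ m)))) ∧
      f = e₀.inv ≫ c.ι.app 0 ≫ e.hom

/-- `f` is a finite composition of pushouts of `g`. -/
inductive FinCompPushoutsOf {A B : SSet.{0}} (g : A ⟶ B) : ∀ {X Y : SSet.{0}}, (X ⟶ Y) → Prop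
| of {X Y : SSet.{0}} (f : X ⟶ Y) : IsPushoutOf g f → FinCompPushoutsOf g f
| comp {X Y Z : SSet.{0}} (f₁ : X ⟶ Y) (f₂ : Y ⟶ Z) :
      IsPushoutOf g f₁ → FinCompPushoutsOf g f₂ → FinCompPushoutsOf g (f₁ ≫ f₂)

/-! ## Lattice operations on subpresheaves -/

variable {C : Type*} [Category C]

/-- Intersection of two subpresheaves. -/
def subInf {F : Cᵒᵖ ⥤ Type} (G G' : Subfunctor F) : Subfunctor F where
  obj U := G.obj U ∩ G'.obj U
  map i := fun _ hx => ⟨G.map i hx.1, G'.map i hx.2⟩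

/-- Union of two subpresheaves. -/
def subSup {F : Cᵒᵖ ⥤ Type} (G G' : Subfunctor F) : Subfunctor F where
  obj U := G.obj U ∪ G'.obj U
  map i := by
    rintro x (hx | hx)
    · exact Or.inl (G.map i hx)
    · exact Or.inr (G'.map i hx)

lemma subInf_le_left {F : Cᵒᵖ ⥤ Type} (G G' : Subfunctor F) : subInf G G' ≤ G :=
  fun _ => Set.inter_subset_left

lemma le_subSup_left {F : Cᵒᵖ ⥤ Type} (G G' : Subfunctor F) : G ≤ subSup G G' :=
  fun _ => Set.subset_union_left

/-! ## The coface `d¹` and the left cone -/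

/-- The coface map `d¹ : Δ[n] → Δ[n+1]`. -/
def d1Map (n : ℕ) : (Δ[n] : SSet.{0}) ⟶ Δ[n + 1] :=
  SSet.stdSimplex.map (SimplexCategory.δ 1)

/-- The restriction of `d¹` to a map `C n → C (n+1) ∩ d¹[Δ[n]]`. -/
def coneToInter (n : ℕ) : ((coneSub n).toFunctor : SSet.{0}) ⟶
    (subInf (coneSub (n + 1)) (Subfunctor.range (d1Map n))).toFunctor where
  app m := ↾fun α => by
    refine ⟨(d1Map n).app m α.1, ?_, ⟨α.1, rfl⟩⟩
    obtain ⟨i, hi1, hin, h⟩ := α.2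
    refine ⟨i + 1, by omega, by omega, fun j => ?_⟩
    have key : stdSimplex.asOrderHom ((d1Map n).app m α.1) j
        = (1 : Fin (n + 2)).succAbove (stdSimplex.asOrderHom α.1 j) := rfl
    rcases h j with h' | h'
    · left
      have h0 : stdSimplex.asOrderHom α.1 j = 0 := by
        apply Fin.ext; exact h'
      rw [key, h0, Fin.succAbove_of_castSucc_lt]
      · simp
      · simp
    · right
      rw [key, Fin.succAbove_of_le_castSucc]
      · simp [Fin.val_succ, h']
      · rw [Fin.le_def]
        simpa using by omega
  naturality m m' g := by
    ext α
    apply Subtype.ext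
    exact NatTrans.naturality_apply (d1Map n) g α.1

/-! ## Horizontally constant bisimplicial sets and closure properties -/

/-- `p₁* A`: the horizontally constant bisimplicial set with `(p₁* A)_{n,m} = A_n`. -/
def pHorizontal (A : SSet.{0}) : BSSet where
  obj nm := A.obj (op nm.unop.1)
  map f := A.map f.unop.1.op

/-- A class of maps of bisimplicial sets is stable under pullbacks. -/
def StableUnderPullbacksB (F : MorphismProperty BSSet) : Prop :=
  ∀ ⦃W X Y Z : BSSet⦄ (p' : W ⟶ X) (f' : W ⟶ Z) (f : X ⟶ Y) (p : Z ⟶ Y),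
    IsPullback p' f' f p → F f → F f'

/-- A class of maps of bisimplicial sets is stable under retracts. -/
def StableUnderRetractsB (F : MorphismProperty BSSet) : Prop :=
  ∀ ⦃X Y X' Y' : BSSet⦄ (f : X ⟶ Y) (g : X' ⟶ Y'), IsRetractOf f g → F g → F f

/-- A class of maps of bisimplicial sets is closed under sequential (inverse) limits:
limits of towers of arrows belonging to the class again belong to the class. -/
def ClosedUnderSequentialLimitsB (F : MorphismProperty BSSet) : Prop :=
  ∀ (G : ℕᵒᵖ ⥤ Arrow BSSet), (∀ n : ℕᵒᵖ, F (G.obj n).hom) →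
    ∀ (c : Cone G), IsLimit c → F c.pt.hom


namespace Frac
open SimplexCategory

lemma simplexHomEq {m n : SimplexCategory} {f g : m ⟶ n}
    (h : ∀ j, f.toOrderHom j = g.toOrderHom j) : f = g :=
  SimplexCategory.Hom.ext _ _ (OrderHom.ext _ _ (funext h))

/-- A Kan fibration which is a weak homotopy equivalence is a trivial Kan fibration. -/
lemma trivialFib_of_whe {S T : SSet.{0}} (f : S ⟶ T) (hkan : KanFibration f)
    (hw : WeakHomotopyEquivalence f) : TrivialKanFibration f := by
  obtain ⟨Z, i, p, hi, hp, hfac⟩ := hw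
  have hrlp : rlpOf HornClass f := by
    rintro A B j ⟨k, l, ⟨e⟩⟩
    have := hkan k l
    exact HasLiftingProperty.of_arrow_iso_left e.symm f
  have hlift : HasLiftingProperty i f := hi f hrlp
  have hsq : CommSq (𝟙 S) i f p := ⟨by simpa using hfac.symm⟩
  obtain ⟨⟨⟨r, hr1, hr2⟩⟩⟩ := hlift.sq_hasLift hsq
  intro n
  constructor
  intro u v husq
  have : HasLiftingProperty (∂Δ[n].ι) p := hp n
  have hsq2 : CommSq (u ≫ i) (∂Δ[n].ι) p v := ⟨by
    rw [Category.assoc, hfac, husq.w]⟩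
  obtain ⟨⟨⟨m, hm1, hm2⟩⟩⟩ := this.sq_hasLift hsq2
  exact CommSq.HasLift.mk' ⟨m ≫ r, by rw [← Category.assoc, hm1, Category.assoc, hr1, Category.comp_id],
    by rw [Category.assoc, hr2, hm2]⟩

lemma bousfield_trivialFib (X : BSSet) (hX : IsBSegal X) (n : ℕ) (hn : 2 ≤ n) :
    TrivialKanFibration (bousfieldMap n X) :=
  by
  have hm : Mono ((coneSub n).ι) := by apply NatTrans.mono_of_mono_app
  exact trivialFib_of_whe _ (hX.1 (coneSub n).ι hm) (hX.2 n hn)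

end Frac
namespace Frac
open SimplexCategory

/-- The unique map to `⦋0⦌`. -/
def toZero (m : SimplexCategory) : m ⟶ ⦋0⦌ := SimplexCategory.const m ⦋0⦌ 0

lemma map_toZero_comp {S : SSet.{0}} {m m' : SimplexCategoryᵒᵖ} (g : m ⟶ m')
    (w : S.obj (op ⦋0⦌)) :
    S.map (toZero m'.unop).op w = S.map g (S.map (toZero m.unop).op w) := by
  rw [← FunctorToTypes.map_comp_apply]
  congr 1

/-- The map `Δ[0] ⟶ S` classifying a vertex. -/
def vtxMap {S : SSet.{0}} (v : vert S) : (Δ[0] : SSet.{0}) ⟶ S where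
  app m := ↾fun _ => S.map (toZero m.unop).op v
  naturality m m' g := by
    ext α
    exact map_toZero_comp g v

lemma vtxMap_app₀ {S : SSet.{0}} (v : vert S) (x : (Δ[0] : SSet.{0}).obj (op ⦋0⦌)) :
    (vtxMap v).app (op ⦋0⦌) x = v := by
  show S.map (toZero (⦋0⦌ : SimplexCategory)).op v = v
  have : toZero ⦋0⦌ = 𝟙 (⦋0⦌ : SimplexCategory) := Subsingleton.elim _ _
  rw [this]
  exact FunctorToTypes.map_id_apply S _

lemma bd1_const {m : SimplexCategoryᵒᵖ} (α : (Δ[1] : SSet.{0}).obj m)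
    (h : ¬Function.Surjective (stdSimplex.asOrderHom α)) :
    ∀ j, stdSimplex.asOrderHom α j = stdSimplex.asOrderHom α 0 := by
  by_contra hc
  push_neg at hc
  obtain ⟨j, hj⟩ := hc
  apply h
  intro b
  by_cases hb : b = stdSimplex.asOrderHom α 0
  · exact ⟨0, hb.symm⟩
  · refine ⟨j, ?_⟩
    have h1 : (b : ℕ) ≠ ((stdSimplex.asOrderHom α 0 : Fin 2) : ℕ) := fun e => hb (Fin.ext e)
    have h2 : ((stdSimplex.asOrderHom α j : Fin 2) : ℕ) ≠ ((stdSimplex.asOrderHom α 0 : Fin 2) : ℕ) :=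
      fun e => hj (Fin.ext e)
    have hb2 : (b : ℕ) < 2 := b.isLt
    have hj2 : ((stdSimplex.asOrderHom α j : Fin 2) : ℕ) < 2 := (stdSimplex.asOrderHom α j).isLt
    have h02 : ((stdSimplex.asOrderHom α 0 : Fin 2) : ℕ) < 2 := (stdSimplex.asOrderHom α 0).isLt
    exact Fin.ext (by omega)

/-- The map `∂Δ[1] ⟶ S` given by two vertices. -/
def bdryMap1 {S : SSet.{0}} (v₁ v₂ : vert S) : (∂Δ[1] : SSet.{0}) ⟶ S where
  app m := ↾fun α => S.map (toZero m.unop).op (if stdSimplex.asOrderHom α.1 0 = 0 then v₁ else v₂)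
  naturality m m' g := by
    ext α
    show S.map (toZero m'.unop).op
        (if stdSimplex.asOrderHom (∂Δ[1].toSSet.map g α).1 0 = 0 then v₁ else v₂)
      = S.map g (S.map (toZero m.unop).op (if stdSimplex.asOrderHom α.1 0 = 0 then v₁ else v₂))
    have e1 : stdSimplex.asOrderHom (∂Δ[1].toSSet.map g α).1 0 = stdSimplex.asOrderHom α.1 (g.unop.toOrderHom 0) := rfl
    rw [e1, bd1_const α.1 α.2 (g.unop.toOrderHom 0)]
    exact map_toZero_comp g _

/-- `δ i` as a vertex of `Δ[1]`. -/
def deltaVert (i : Fin 2) : (Δ[1] : SSet.{0}).obj (op ⦋0⦌) :=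
  (stdSimplex.objEquiv).symm (SimplexCategory.δ i)

lemma deltaVert_not_surj (i : Fin 2) :
    ¬Function.Surjective (stdSimplex.asOrderHom (deltaVert i)) := by
  intro hs
  obtain ⟨j, hj⟩ := hs i
  have hj' : i.succAbove j = i := hj
  exact Fin.succAbove_ne i j hj'

lemma fiber_edge {S T : SSet.{0}} {p : S ⟶ T} (hp : TrivialKanFibration p)
    (v₁ v₂ : vert S) (h : p.app (op ⦋0⦌) v₁ = p.app (op ⦋0⦌) v₂) :
    ∃ e : S.obj (op ⦋1⦌),
      SimplicialObject.δ S 1 e = v₁ ∧ SimplicialObject.δ S 0 e = v₂ ∧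
      p.app (op ⦋1⦌) e = T.map (toZero ⦋1⦌).op (p.app (op ⦋0⦌) v₁) := by
  have hlp : HasLiftingProperty (∂Δ[1].ι) p := hp 1
  have hsq : CommSq (bdryMap1 v₁ v₂) (∂Δ[1].ι) p
      (SSet.stdSimplex.map (toZero ⦋1⦌) ≫ vtxMap (p.app (op ⦋0⦌) v₁)) := by
    constructor
    ext m α
    show p.app m (S.map (toZero m.unop).op (if stdSimplex.asOrderHom α.1 0 = 0 then v₁ else v₂))
      = T.map (toZero m.unop).op (p.app (op (⦋0⦌ : SimplexCategory)) v₁)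
    rw [FunctorToTypes.naturality]
    by_cases hc : (stdSimplex.asOrderHom α.1) 0 = 0
    · erw [if_pos hc]
    · erw [if_neg hc, h]
  obtain ⟨⟨⟨L, hL1, hL2⟩⟩⟩ := hlp.sq_hasLift hsq
  have hvert : ∀ i : Fin 2, S.map (SimplexCategory.δ i).op (L.app (op ⦋1⦌) (stdSimplex.objEquiv.symm (𝟙 ⦋1⦌) : Δ[1] _⦋1⦌))
      = (if stdSimplex.asOrderHom (deltaVert i) 0 = 0 then v₁ else v₂) := by
    intro i
    rw [← FunctorToTypes.naturality]
    have he : (Δ[1] : SSet.{0}).map (SimplexCategory.δ i).op (stdSimplex.objEquiv.symm (𝟙 ⦋1⦌) : Δ[1] _⦋1⦌)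
        = deltaVert i := by
      rw [stdSimplex.map_apply]
      show (stdSimplex.objEquiv).symm (SimplexCategory.δ i ≫ _) = _
      rw [Equiv.apply_symm_apply, Category.comp_id]
      rfl
    rw [he]
    have h2 := ConcreteCategory.congr_hom (NatTrans.congr_app hL1 (op (⦋0⦌ : SimplexCategory)))
      ⟨deltaVert i, deltaVert_not_surj i⟩
    have h3 : L.app (op (⦋0⦌ : SimplexCategory)) (deltaVert i)
        = S.map (toZero (⦋0⦌ : SimplexCategory)).op
          (if stdSimplex.asOrderHom (deltaVert i) 0 = 0 then v₁ else v₂) := h2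
    rw [h3]
    have : toZero ⦋0⦌ = 𝟙 (⦋0⦌ : SimplexCategory) := Subsingleton.elim _ _
    rw [this]
    exact FunctorToTypes.map_id_apply S _
  refine ⟨L.app (op ⦋1⦌) (stdSimplex.objEquiv.symm (𝟙 ⦋1⦌) : Δ[1] _⦋1⦌), ?_, ?_, ?_⟩
  · have := hvert 1
    rw [if_pos (by decide)] at this
    exact this
  · have := hvert 0
    rw [if_neg (by decide)] at this
    exact this
  · exact ConcreteCategory.congr_hom (NatTrans.congr_app hL2 (op (⦋1⦌ : SimplexCategory)))
      (stdSimplex.objEquiv.symm (𝟙 ⦋1⦌) : Δ[1] _⦋1⦌)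

end Frac
namespace Frac
open SimplexCategory

/-- The vertex `0` of `Δ[1]`. -/
def vert0 : (Δ[0] : SSet.{0}) ⟶ Δ[1] := SSet.stdSimplex.map (SimplexCategory.δ (1 : Fin 2))

lemma fin2_zero_or_one (v : Fin 2) : v = 0 ∨ v = 1 := by
  have h2 : (v : ℕ) < 2 := v.isLt
  have : (v : ℕ) = 0 ∨ (v : ℕ) = 1 := by omega
  rcases this with h | h
  · exact Or.inl (Fin.ext h)
  · exact Or.inr (Fin.ext h)

/-- Collapse a simplex of `Δ[2]` with values in `{0,i}` to a simplex of `Δ[1]`. -/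
def collapse {m : SimplexCategory} (α : (Δ[2] : SSet.{0}).obj (op m)) :
    (Δ[1] : SSet.{0}).obj (op m) :=
  stdSimplex.objMk ⟨fun j => if stdSimplex.asOrderHom α j = 0 then 0 else 1, by
    intro j k hjk
    by_cases h1 : stdSimplex.asOrderHom α j = 0
    · simp only [h1, if_pos rfl]
      exact Fin.zero_le _
    · have h2 : ¬(stdSimplex.asOrderHom α k = 0) := fun hk =>
        h1 (le_antisymm (hk ▸ (stdSimplex.asOrderHom α).monotone hjk) (Fin.zero_le _))
      simp only [h1, h2, if_neg, le_refl]⟩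

lemma asOrderHom_collapse {m : SimplexCategory} (α : (Δ[2] : SSet.{0}).obj (op m)) (j) :
    stdSimplex.asOrderHom (collapse α) j = if stdSimplex.asOrderHom α j = 0 then 0 else 1 := rfl

lemma collapse_natural {m m' : SimplexCategory} (θ : m' ⟶ m)
    (α : (Δ[2] : SSet.{0}).obj (op m)) :
    collapse ((Δ[2] : SSet.{0}).map θ.op α) = (Δ[1] : SSet.{0}).map θ.op (collapse α) := by
  apply (stdSimplex.objEquiv).injective
  apply simplexHomEq
  intro j
  rfl

lemma cone2_cases {m : SimplexCategory} {α : (Δ[2] : SSet.{0}).obj (op m)}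
    (hα : α ∈ (coneSub 2).obj (op m)) :
    (∀ j, (stdSimplex.asOrderHom α j : ℕ) ≤ 1) ∨
      (∀ j, (stdSimplex.asOrderHom α j : ℕ) = 0 ∨ (stdSimplex.asOrderHom α j : ℕ) = 2) := by
  obtain ⟨i, hi1, hi2, h⟩ := hα
  rcases Nat.lt_or_ge i 2 with hc | hc
  · left
    intro j
    rcases h j with h' | h' <;> omega
  · right
    intro j
    rcases h j with h' | h' <;> omega

/-- Agreement of two maps `Δ[1] □ B → X` at the vertex 0, pointwise form. -/
lemma FG_agree {X : BSSet} {B : SSet.{0}} {F G : box Δ[1] B ⟶ X}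
    (h : boxHomLeft vert0 B ≫ F = boxHomLeft vert0 B ≫ G)
    (nm : (SimplexCategory × SimplexCategory)ᵒᵖ)
    (β : (Δ[1] : SSet.{0}).obj (op nm.unop.1)) (hβ : ∀ j, stdSimplex.asOrderHom β j = 0)
    (b : B.obj (op nm.unop.2)) :
    F.app nm (β, b) = G.app nm (β, b) := by
  have hβ' : β = vert0.app (op nm.unop.1) (stdSimplex.const 0 0 (op nm.unop.1)) := by
    apply (stdSimplex.objEquiv).injective
    apply simplexHomEq
    intro j
    exact (hβ j).trans (by rfl)
  rw [hβ']
  exact ConcreteCategory.congr_hom (NatTrans.congr_app h nm) ((stdSimplex.const 0 0 (op nm.unop.1), b) : (Δ[0] : SSet.{0}).obj (op nm.unop.1) × B.obj (op nm.unop.2))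

/-- The pairing: a map `C₂ □ B → X` from two maps `Δ[1] □ B → X` agreeing at the vertex 0. -/
def pairMap {X : BSSet} {B : SSet.{0}} (F G : box Δ[1] B ⟶ X)
    (h : boxHomLeft vert0 B ≫ F = boxHomLeft vert0 B ≫ G) :
    box (coneSub 2).toFunctor B ⟶ X where
  app nm := ↾fun q => if (∀ j, (stdSimplex.asOrderHom q.1.1 j : ℕ) ≤ 1)
      then G.app nm (collapse q.1.1, q.2) else F.app nm (collapse q.1.1, q.2)
  naturality nm nm' g := by
    ext q
    obtain ⟨⟨α, hα⟩, b⟩ := q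
    show (if (∀ j, (stdSimplex.asOrderHom ((Δ[2] : SSet.{0}).map g.unop.1.op α) j : ℕ) ≤ 1)
        then G.app nm' (collapse ((Δ[2] : SSet.{0}).map g.unop.1.op α), B.map g.unop.2.op b)
        else F.app nm' (collapse ((Δ[2] : SSet.{0}).map g.unop.1.op α), B.map g.unop.2.op b))
      = X.map g (if (∀ j, (stdSimplex.asOrderHom α j : ℕ) ≤ 1)
        then G.app nm (collapse α, b) else F.app nm (collapse α, b))
    by_cases hc : (∀ j, (stdSimplex.asOrderHom α j : ℕ) ≤ 1)
    · have hc' : ∀ j, (stdSimplex.asOrderHom ((Δ[2] : SSet.{0}).map g.unop.1.op α) j : ℕ) ≤ 1 :=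
        fun j => hc _
      rw [if_pos hc', if_pos hc, collapse_natural]
      exact NatTrans.naturality_apply G g (((collapse α, b)) : (Δ[1] : SSet.{0}).obj (op nm.unop.1) × B.obj (op nm.unop.2))
    · have h02 : ∀ j, (stdSimplex.asOrderHom α j : ℕ) = 0 ∨ (stdSimplex.asOrderHom α j : ℕ) = 2 := by
        rcases cone2_cases hα with hl | hr
        · exact absurd hl hc
        · exact hr
      rw [if_neg hc]
      by_cases hc' : ∀ j, (stdSimplex.asOrderHom ((Δ[2] : SSet.{0}).map g.unop.1.op α) j : ℕ) ≤ 1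
      · -- all values of the restricted simplex are 0
        have hz : ∀ j, stdSimplex.asOrderHom (collapse ((Δ[2] : SSet.{0}).map g.unop.1.op α)) j = 0 := by
          intro j
          rw [asOrderHom_collapse, if_pos]
          apply Fin.ext
          rcases h02 (g.unop.1.toOrderHom j) with h' | h'
          · exact h'
          · exact absurd (hc' j) (by
              have : (stdSimplex.asOrderHom ((Δ[2] : SSet.{0}).map g.unop.1.op α) j : ℕ)
                  = (stdSimplex.asOrderHom α (g.unop.1.toOrderHom j) : ℕ) := rfl
              omega)
        rw [if_pos hc', ← FG_agree h nm' _ hz, collapse_natural]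
        exact NatTrans.naturality_apply F g (((collapse α, b)) : (Δ[1] : SSet.{0}).obj (op nm.unop.1) × B.obj (op nm.unop.2))
      · rw [if_neg hc', collapse_natural]
        exact NatTrans.naturality_apply F g (((collapse α, b)) : (Δ[1] : SSet.{0}).obj (op nm.unop.1) × B.obj (op nm.unop.2))

lemma collapse_edge2 {m : SimplexCategory} (β : (Δ[1] : SSet.{0}).obj (op m)) :
    collapse (((coneEdge 2 2 (by decide)).app (op m) β).1) = β := by
  apply (stdSimplex.objEquiv).injective
  apply simplexHomEq
  intro j
  show stdSimplex.asOrderHom (collapse (((coneEdge 2 2 (by decide)).app (op m) β).1)) j = stdSimplex.asOrderHom β j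
  rw [asOrderHom_collapse]
  have hval : stdSimplex.asOrderHom (((coneEdge 2 2 (by decide)).app (op m) β).1) j
      = (mkOfLe (0 : Fin 3) 2 (by decide)).toOrderHom (stdSimplex.asOrderHom β j) := rfl
  rw [hval]
  rcases fin2_zero_or_one (stdSimplex.asOrderHom β j) with h | h <;> rw [h]
  · decide
  · rw [if_neg (by decide)]

lemma collapse_edge1 {m : SimplexCategory} (β : (Δ[1] : SSet.{0}).obj (op m)) :
    collapse (((coneEdge 2 1 (by decide)).app (op m) β).1) = β := by
  apply (stdSimplex.objEquiv).injective
  apply simplexHomEq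
  intro j
  show stdSimplex.asOrderHom (collapse (((coneEdge 2 1 (by decide)).app (op m) β).1)) j = stdSimplex.asOrderHom β j
  rw [asOrderHom_collapse]
  have hval : stdSimplex.asOrderHom (((coneEdge 2 1 (by decide)).app (op m) β).1) j
      = (mkOfLe (0 : Fin 3) 1 (by decide)).toOrderHom (stdSimplex.asOrderHom β j) := rfl
  rw [hval]
  rcases fin2_zero_or_one (stdSimplex.asOrderHom β j) with h | h <;> rw [h]
  · decide
  · rw [if_neg (by decide)]

end Frac
namespace Frac
open SimplexCategory

lemma pairMap_eF {X : BSSet} {B : SSet.{0}} (F G : box Δ[1] B ⟶ X)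
    (h : boxHomLeft vert0 B ≫ F = boxHomLeft vert0 B ≫ G) :
    boxHomLeft (coneEdge 2 2 (by decide)) B ≫ pairMap F G h = F := by
  ext nm q
  obtain ⟨β, b⟩ := q
  show (if (∀ j, (stdSimplex.asOrderHom (((coneEdge 2 2 (by decide)).app (op nm.unop.1) β).1) j : ℕ) ≤ 1)
      then G.app nm (collapse (((coneEdge 2 2 (by decide)).app (op nm.unop.1) β).1), b)
      else F.app nm (collapse (((coneEdge 2 2 (by decide)).app (op nm.unop.1) β).1), b))
    = F.app nm (β, b)
  have hval : ∀ j, stdSimplex.asOrderHom (((coneEdge 2 2 (by decide)).app (op nm.unop.1) β).1) j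
      = (mkOfLe (0 : Fin 3) 2 (by decide)).toOrderHom (stdSimplex.asOrderHom β j) := fun _ => rfl
  by_cases hz : ∀ j, stdSimplex.asOrderHom β j = 0
  · have hc : ∀ j, (stdSimplex.asOrderHom (((coneEdge 2 2 (by decide)).app (op nm.unop.1) β).1) j : ℕ) ≤ 1 := by
      intro j
      rw [hval j, hz j]
      decide
    rw [if_pos hc, collapse_edge2]
    exact (FG_agree h nm β hz b).symm
  · have hc : ¬(∀ j, (stdSimplex.asOrderHom (((coneEdge 2 2 (by decide)).app (op nm.unop.1) β).1) j : ℕ) ≤ 1) := by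
      intro hcon
      apply hz
      intro j
      rcases fin2_zero_or_one (stdSimplex.asOrderHom β j) with h' | h'
      · exact h'
      · have h5 := hcon j
        rw [hval j, h'] at h5
        exact absurd h5 (by decide)
    rw [if_neg hc, collapse_edge2]

lemma pairMap_eG {X : BSSet} {B : SSet.{0}} (F G : box Δ[1] B ⟶ X)
    (h : boxHomLeft vert0 B ≫ F = boxHomLeft vert0 B ≫ G) :
    boxHomLeft (coneEdge 2 1 (by decide)) B ≫ pairMap F G h = G := by
  ext nm q
  obtain ⟨β, b⟩ := q
  show (if (∀ j, (stdSimplex.asOrderHom (((coneEdge 2 1 (by decide)).app (op nm.unop.1) β).1) j : ℕ) ≤ 1)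
      then G.app nm (collapse (((coneEdge 2 1 (by decide)).app (op nm.unop.1) β).1), b)
      else F.app nm (collapse (((coneEdge 2 1 (by decide)).app (op nm.unop.1) β).1), b))
    = G.app nm (β, b)
  have hval : ∀ j, stdSimplex.asOrderHom (((coneEdge 2 1 (by decide)).app (op nm.unop.1) β).1) j
      = (mkOfLe (0 : Fin 3) 1 (by decide)).toOrderHom (stdSimplex.asOrderHom β j) := fun _ => rfl
  have hc : ∀ j, (stdSimplex.asOrderHom (((coneEdge 2 1 (by decide)).app (op nm.unop.1) β).1) j : ℕ) ≤ 1 := by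
    intro j
    rw [hval j]
    rcases fin2_zero_or_one (stdSimplex.asOrderHom β j) with h' | h' <;> rw [h'] <;> decide
  rw [if_pos hc, collapse_edge1]

lemma eq_pairMap {X : BSSet} {B : SSet.{0}} {F G : box Δ[1] B ⟶ X}
    (h : boxHomLeft vert0 B ≫ F = boxHomLeft vert0 B ≫ G)
    (W : box (coneSub 2).toFunctor B ⟶ X)
    (hF : boxHomLeft (coneEdge 2 2 (by decide)) B ≫ W = F)
    (hG : boxHomLeft (coneEdge 2 1 (by decide)) B ≫ W = G) :
    W = pairMap F G h := by
  ext nm q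
  obtain ⟨⟨α, hα⟩, b⟩ := q
  show W.app nm (⟨α, hα⟩, b) = (if (∀ j, (stdSimplex.asOrderHom α j : ℕ) ≤ 1)
      then G.app nm (collapse α, b) else F.app nm (collapse α, b))
  by_cases hc : ∀ j, (stdSimplex.asOrderHom α j : ℕ) ≤ 1
  · rw [if_pos hc]
    have hq : (⟨α, hα⟩ : ((coneSub 2).toFunctor : SSet.{0}).obj (op nm.unop.1))
        = (coneEdge 2 1 (by decide)).app (op nm.unop.1) (collapse α) := by
      apply Subtype.ext
      apply (stdSimplex.objEquiv).injective
      apply simplexHomEq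
      intro j
      show stdSimplex.asOrderHom α j = stdSimplex.asOrderHom (((coneEdge 2 1 (by decide)).app _ (collapse α)).1) j
      have hval : stdSimplex.asOrderHom (((coneEdge 2 1 (by decide)).app _ (collapse α)).1) j
          = (mkOfLe (0 : Fin 3) 1 (by decide)).toOrderHom (stdSimplex.asOrderHom (collapse α) j) := rfl
      rw [hval, asOrderHom_collapse]
      by_cases h0 : stdSimplex.asOrderHom α j = 0
      · rw [if_pos h0, h0]
        rfl
      · rw [if_neg h0]
        apply Fin.ext
        have h1 : (stdSimplex.asOrderHom α j : ℕ) ≤ 1 := hc j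
        have h2 : (stdSimplex.asOrderHom α j : ℕ) ≠ 0 := fun e => h0 (Fin.ext e)
        have h3 : (((mkOfLe (0 : Fin 3) 1 (by decide)).toOrderHom 1 : Fin 3) : ℕ) = 1 := rfl
        rw [h3]
        omega
    rw [hq]
    exact ConcreteCategory.congr_hom (NatTrans.congr_app hG nm) (((collapse α, b)) : (Δ[1] : SSet.{0}).obj (op nm.unop.1) × B.obj (op nm.unop.2))
  · rw [if_neg hc]
    have h02 : ∀ j, (stdSimplex.asOrderHom α j : ℕ) = 0 ∨ (stdSimplex.asOrderHom α j : ℕ) = 2 := by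
      rcases cone2_cases hα with hl | hr
      · exact absurd hl hc
      · exact hr
    have hq : (⟨α, hα⟩ : ((coneSub 2).toFunctor : SSet.{0}).obj (op nm.unop.1))
        = (coneEdge 2 2 (by decide)).app (op nm.unop.1) (collapse α) := by
      apply Subtype.ext
      apply (stdSimplex.objEquiv).injective
      apply simplexHomEq
      intro j
      show stdSimplex.asOrderHom α j = stdSimplex.asOrderHom (((coneEdge 2 2 (by decide)).app _ (collapse α)).1) j
      have hval : stdSimplex.asOrderHom (((coneEdge 2 2 (by decide)).app _ (collapse α)).1) j
          = (mkOfLe (0 : Fin 3) 2 (by decide)).toOrderHom (stdSimplex.asOrderHom (collapse α) j) := rfl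
      rw [hval, asOrderHom_collapse]
      by_cases h0 : stdSimplex.asOrderHom α j = 0
      · rw [if_pos h0, h0]
        rfl
      · rw [if_neg h0]
        apply Fin.ext
        have h2 : (stdSimplex.asOrderHom α j : ℕ) ≠ 0 := fun e => h0 (Fin.ext e)
        have h4 : (stdSimplex.asOrderHom α j : ℕ) = 2 := by rcases h02 j with h' | h' <;> omega
        have h3 : (((mkOfLe (0 : Fin 3) 2 (by decide)).toOrderHom 1 : Fin 3) : ℕ) = 2 := rfl
        rw [h3]
        omega
    rw [hq]
    exact ConcreteCategory.congr_hom (NatTrans.congr_app hF nm) (((collapse α, b)) : (Δ[1] : SSet.{0}).obj (op nm.unop.1) × B.obj (op nm.unop.2))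

end Frac
namespace Frac
open SimplexCategory

/-- Collapse a simplex of `Δ[3]` with values in `{0,i}` to a simplex of `Δ[1]`. -/
def collapse3 {m : SimplexCategory} (α : (Δ[3] : SSet.{0}).obj (op m)) :
    (Δ[1] : SSet.{0}).obj (op m) :=
  stdSimplex.objMk ⟨fun j => if stdSimplex.asOrderHom α j = 0 then 0 else 1, by
    intro j k hjk
    by_cases h1 : stdSimplex.asOrderHom α j = 0
    · simp only [h1, if_pos rfl]
      exact Fin.zero_le _
    · have h2 : ¬(stdSimplex.asOrderHom α k = 0) := fun hk =>
        h1 (le_antisymm (hk ▸ (stdSimplex.asOrderHom α).monotone hjk) (Fin.zero_le _))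
      simp only [h1, h2, if_neg, le_refl]⟩

lemma asOrderHom_collapse3 {m : SimplexCategory} (α : (Δ[3] : SSet.{0}).obj (op m)) (j) :
    stdSimplex.asOrderHom (collapse3 α) j = if stdSimplex.asOrderHom α j = 0 then 0 else 1 := rfl

lemma collapse3_natural {m m' : SimplexCategory} (θ : m' ⟶ m)
    (α : (Δ[3] : SSet.{0}).obj (op m)) :
    collapse3 ((Δ[3] : SSet.{0}).map θ.op α) = (Δ[1] : SSet.{0}).map θ.op (collapse3 α) := by
  apply (stdSimplex.objEquiv).injective
  apply simplexHomEq
  intro j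
  rfl

lemma cone3_cases {m : SimplexCategory} {α : (Δ[3] : SSet.{0}).obj (op m)}
    (hα : α ∈ (coneSub 3).obj (op m)) :
    (∀ j, (stdSimplex.asOrderHom α j : ℕ) ≤ 1) ∨
      (∀ j, (stdSimplex.asOrderHom α j : ℕ) = 0 ∨ (stdSimplex.asOrderHom α j : ℕ) = 2) ∨
      (∀ j, (stdSimplex.asOrderHom α j : ℕ) = 0 ∨ (stdSimplex.asOrderHom α j : ℕ) = 3) := by
  obtain ⟨i, hi1, hi2, h⟩ := hα
  rcases Nat.lt_or_ge i 2 with hc | hc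
  · exact Or.inl (fun j => by rcases h j with h' | h' <;> omega)
  rcases Nat.lt_or_ge i 3 with hc' | hc'
  · exact Or.inr (Or.inl (fun j => by rcases h j with h' | h' <;> omega))
  · exact Or.inr (Or.inr (fun j => by rcases h j with h' | h' <;> omega))

/-- The triple pairing: a map `C₃ □ B → X` from maps `Δ[1] □ B → X` agreeing at the vertex 0,
restricting to `H`, `G`, `F` on the edges `0 → 1`, `0 → 2`, `0 → 3` respectively. -/
def tripleMap {X : BSSet} {B : SSet.{0}} (F G H : box Δ[1] B ⟶ X)
    (hHG : boxHomLeft vert0 B ≫ H = boxHomLeft vert0 B ≫ G)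
    (hHF : boxHomLeft vert0 B ≫ H = boxHomLeft vert0 B ≫ F) :
    box (coneSub 3).toFunctor B ⟶ X where
  app nm := ↾fun q => if (∀ j, (stdSimplex.asOrderHom q.1.1 j : ℕ) ≤ 1) then H.app nm (collapse3 q.1.1, q.2)
    else if (∀ j, (stdSimplex.asOrderHom q.1.1 j : ℕ) ≤ 2) then G.app nm (collapse3 q.1.1, q.2)
    else F.app nm (collapse3 q.1.1, q.2)
  naturality nm nm' g := by
    ext q
    obtain ⟨⟨α, hα⟩, b⟩ := q
    set α' := (Δ[3] : SSet.{0}).map g.unop.1.op α with hα'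
    have hvals : ∀ j, stdSimplex.asOrderHom α' j = stdSimplex.asOrderHom α (g.unop.1.toOrderHom j) := fun _ => rfl
    show (if (∀ j, (stdSimplex.asOrderHom α' j : ℕ) ≤ 1) then H.app nm' (collapse3 α', B.map g.unop.2.op b)
        else if (∀ j, (stdSimplex.asOrderHom α' j : ℕ) ≤ 2) then G.app nm' (collapse3 α', B.map g.unop.2.op b)
        else F.app nm' (collapse3 α', B.map g.unop.2.op b))
      = X.map g (if (∀ j, (stdSimplex.asOrderHom α j : ℕ) ≤ 1) then H.app nm (collapse3 α, b)
        else if (∀ j, (stdSimplex.asOrderHom α j : ℕ) ≤ 2) then G.app nm (collapse3 α, b)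
        else F.app nm (collapse3 α, b))
    by_cases hc1 : ∀ j, (stdSimplex.asOrderHom α j : ℕ) ≤ 1
    · have hc1' : ∀ j, (stdSimplex.asOrderHom α' j : ℕ) ≤ 1 := fun j => by rw [hvals j]; exact hc1 _
      rw [if_pos hc1, if_pos hc1', hα', collapse3_natural]
      exact NatTrans.naturality_apply H g (((collapse3 α, b)) : (Δ[1] : SSet.{0}).obj (op nm.unop.1) × B.obj (op nm.unop.2))
    · rcases cone3_cases hα with hl | h2 | h3
      · exact absurd hl hc1
      · have hc2 : ∀ j, (stdSimplex.asOrderHom α j : ℕ) ≤ 2 := fun j => by rcases h2 j with h' | h' <;> omega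
        rw [if_neg hc1, if_pos hc2]
        by_cases hc1' : ∀ j, (stdSimplex.asOrderHom α' j : ℕ) ≤ 1
        · have hz : ∀ j, stdSimplex.asOrderHom (collapse3 α') j = 0 := by
            intro j
            have h0 : stdSimplex.asOrderHom α' j = 0 := by
              apply Fin.ext
              have := hc1' j
              rw [hvals j] at this ⊢
              simp only [Fin.val_zero]
              rcases h2 (g.unop.1.toOrderHom j) with h' | h' <;> omega
            rw [asOrderHom_collapse3, if_pos h0]
          rw [if_pos hc1', FG_agree hHG nm' _ hz, hα', collapse3_natural]
          exact NatTrans.naturality_apply G g (((collapse3 α, b)) : (Δ[1] : SSet.{0}).obj (op nm.unop.1) × B.obj (op nm.unop.2))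
        · have hc2' : ∀ j, (stdSimplex.asOrderHom α' j : ℕ) ≤ 2 := fun j => by
            rw [hvals j]; exact hc2 _
          rw [if_neg hc1', if_pos hc2', hα', collapse3_natural]
          exact NatTrans.naturality_apply G g (((collapse3 α, b)) : (Δ[1] : SSet.{0}).obj (op nm.unop.1) × B.obj (op nm.unop.2))
      · have hc2 : ¬(∀ j, (stdSimplex.asOrderHom α j : ℕ) ≤ 2) := by
          intro hcon
          apply hc1
          intro j
          rcases h3 j with h' | h' <;> [omega; exact absurd (hcon j) (by omega)]
        rw [if_neg hc1, if_neg hc2]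
        by_cases hc1' : ∀ j, (stdSimplex.asOrderHom α' j : ℕ) ≤ 1
        · have hz : ∀ j, stdSimplex.asOrderHom (collapse3 α') j = 0 := by
            intro j
            have h0 : stdSimplex.asOrderHom α' j = 0 := by
              apply Fin.ext
              have := hc1' j
              rw [hvals j] at this ⊢
              simp only [Fin.val_zero]
              rcases h3 (g.unop.1.toOrderHom j) with h' | h' <;> omega
            rw [asOrderHom_collapse3, if_pos h0]
          rw [if_pos hc1', FG_agree hHF nm' _ hz, hα', collapse3_natural]
          exact NatTrans.naturality_apply F g (((collapse3 α, b)) : (Δ[1] : SSet.{0}).obj (op nm.unop.1) × B.obj (op nm.unop.2))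
        · have hc2' : ¬(∀ j, (stdSimplex.asOrderHom α' j : ℕ) ≤ 2) := by
            intro hcon
            apply hc1'
            intro j
            have := hcon j
            rw [hvals j] at this ⊢
            rcases h3 (g.unop.1.toOrderHom j) with h' | h' <;> omega
          rw [if_neg hc1', if_neg hc2', hα', collapse3_natural]
          exact NatTrans.naturality_apply F g (((collapse3 α, b)) : (Δ[1] : SSet.{0}).obj (op nm.unop.1) × B.obj (op nm.unop.2))

end Frac
namespace Frac
open SimplexCategory

lemma collapse3_edge (i : Fin 4) (hi : i ≠ 0) {m : SimplexCategory}
    (β : (Δ[1] : SSet.{0}).obj (op m)) :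
    collapse3 (((coneEdge 3 i hi).app (op m) β).1) = β := by
  apply (stdSimplex.objEquiv).injective
  apply simplexHomEq
  intro j
  show stdSimplex.asOrderHom (collapse3 (((coneEdge 3 i hi).app (op m) β).1)) j = stdSimplex.asOrderHom β j
  rw [asOrderHom_collapse3]
  have hval : stdSimplex.asOrderHom (((coneEdge 3 i hi).app (op m) β).1) j
      = (mkOfLe (0 : Fin 4) i (Fin.zero_le i)).toOrderHom (stdSimplex.asOrderHom β j) := rfl
  rw [hval]
  rcases fin2_zero_or_one (stdSimplex.asOrderHom β j) with h | h <;> rw [h]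
  · rw [if_pos (show (mkOfLe (0 : Fin 4) i (Fin.zero_le i)).toOrderHom 0 = 0 from rfl)]
  · rw [if_neg (show ¬((mkOfLe (0 : Fin 4) i (Fin.zero_le i)).toOrderHom 1 = 0) from
      fun hcon => hi ((show (mkOfLe (0 : Fin 4) i (Fin.zero_le i)).toOrderHom 1 = i from rfl)
        ▸ hcon))]

lemma coneEdge3_vals {m : SimplexCategory} (i : Fin 4) (hi : i ≠ 0)
    (β : (Δ[1] : SSet.{0}).obj (op m)) (j) :
    stdSimplex.asOrderHom (((coneEdge 3 i hi).app (op m) β).1) j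
      = (mkOfLe (0 : Fin 4) i (Fin.zero_le i)).toOrderHom (stdSimplex.asOrderHom β j) := rfl

lemma tripleMap_e1 {X : BSSet} {B : SSet.{0}} (F G H : box Δ[1] B ⟶ X)
    (hHG : boxHomLeft vert0 B ≫ H = boxHomLeft vert0 B ≫ G)
    (hHF : boxHomLeft vert0 B ≫ H = boxHomLeft vert0 B ≫ F) :
    boxHomLeft (coneEdge 3 1 (by decide)) B ≫ tripleMap F G H hHG hHF = H := by
  ext nm q
  obtain ⟨β, b⟩ := q
  show (if (∀ j, (stdSimplex.asOrderHom (((coneEdge 3 1 (by decide)).app (op nm.unop.1) β).1) j : ℕ) ≤ 1)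
      then H.app nm (collapse3 (((coneEdge 3 1 (by decide)).app (op nm.unop.1) β).1), b)
      else if (∀ j, (stdSimplex.asOrderHom (((coneEdge 3 1 (by decide)).app (op nm.unop.1) β).1) j : ℕ) ≤ 2)
      then G.app nm (collapse3 (((coneEdge 3 1 (by decide)).app (op nm.unop.1) β).1), b)
      else F.app nm (collapse3 (((coneEdge 3 1 (by decide)).app (op nm.unop.1) β).1), b))
    = H.app nm (β, b)
  have hc : ∀ j, (stdSimplex.asOrderHom (((coneEdge 3 1 (by decide)).app (op nm.unop.1) β).1) j : ℕ) ≤ 1 := by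
    intro j
    rw [coneEdge3_vals]
    rcases fin2_zero_or_one (stdSimplex.asOrderHom β j) with h' | h' <;> rw [h'] <;> decide
  rw [if_pos hc, collapse3_edge]

lemma tripleMap_e2 {X : BSSet} {B : SSet.{0}} (F G H : box Δ[1] B ⟶ X)
    (hHG : boxHomLeft vert0 B ≫ H = boxHomLeft vert0 B ≫ G)
    (hHF : boxHomLeft vert0 B ≫ H = boxHomLeft vert0 B ≫ F) :
    boxHomLeft (coneEdge 3 2 (by decide)) B ≫ tripleMap F G H hHG hHF = G := by
  ext nm q
  obtain ⟨β, b⟩ := q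
  show (if (∀ j, (stdSimplex.asOrderHom (((coneEdge 3 2 (by decide)).app (op nm.unop.1) β).1) j : ℕ) ≤ 1)
      then H.app nm (collapse3 (((coneEdge 3 2 (by decide)).app (op nm.unop.1) β).1), b)
      else if (∀ j, (stdSimplex.asOrderHom (((coneEdge 3 2 (by decide)).app (op nm.unop.1) β).1) j : ℕ) ≤ 2)
      then G.app nm (collapse3 (((coneEdge 3 2 (by decide)).app (op nm.unop.1) β).1), b)
      else F.app nm (collapse3 (((coneEdge 3 2 (by decide)).app (op nm.unop.1) β).1), b))
    = G.app nm (β, b)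
  by_cases hz : ∀ j, stdSimplex.asOrderHom β j = 0
  · have hc : ∀ j, (stdSimplex.asOrderHom (((coneEdge 3 2 (by decide)).app (op nm.unop.1) β).1) j : ℕ) ≤ 1 := by
      intro j
      rw [coneEdge3_vals, hz j]
      decide
    rw [if_pos hc, collapse3_edge]
    exact FG_agree hHG nm β hz b
  · have hc : ¬(∀ j, (stdSimplex.asOrderHom (((coneEdge 3 2 (by decide)).app (op nm.unop.1) β).1) j : ℕ) ≤ 1) := by
      intro hcon
      apply hz
      intro j
      rcases fin2_zero_or_one (stdSimplex.asOrderHom β j) with h' | h'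
      · exact h'
      · have h5 := hcon j
        rw [coneEdge3_vals, h'] at h5
        exact absurd h5 (by decide)
    have hc2 : ∀ j, (stdSimplex.asOrderHom (((coneEdge 3 2 (by decide)).app (op nm.unop.1) β).1) j : ℕ) ≤ 2 := by
      intro j
      rw [coneEdge3_vals]
      rcases fin2_zero_or_one (stdSimplex.asOrderHom β j) with h' | h' <;> rw [h'] <;> decide
    rw [if_neg hc, if_pos hc2, collapse3_edge]

lemma tripleMap_e3 {X : BSSet} {B : SSet.{0}} (F G H : box Δ[1] B ⟶ X)
    (hHG : boxHomLeft vert0 B ≫ H = boxHomLeft vert0 B ≫ G)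
    (hHF : boxHomLeft vert0 B ≫ H = boxHomLeft vert0 B ≫ F) :
    boxHomLeft (coneEdge 3 3 (by decide)) B ≫ tripleMap F G H hHG hHF = F := by
  ext nm q
  obtain ⟨β, b⟩ := q
  show (if (∀ j, (stdSimplex.asOrderHom (((coneEdge 3 3 (by decide)).app (op nm.unop.1) β).1) j : ℕ) ≤ 1)
      then H.app nm (collapse3 (((coneEdge 3 3 (by decide)).app (op nm.unop.1) β).1), b)
      else if (∀ j, (stdSimplex.asOrderHom (((coneEdge 3 3 (by decide)).app (op nm.unop.1) β).1) j : ℕ) ≤ 2)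
      then G.app nm (collapse3 (((coneEdge 3 3 (by decide)).app (op nm.unop.1) β).1), b)
      else F.app nm (collapse3 (((coneEdge 3 3 (by decide)).app (op nm.unop.1) β).1), b))
    = F.app nm (β, b)
  by_cases hz : ∀ j, stdSimplex.asOrderHom β j = 0
  · have hc : ∀ j, (stdSimplex.asOrderHom (((coneEdge 3 3 (by decide)).app (op nm.unop.1) β).1) j : ℕ) ≤ 1 := by
      intro j
      rw [coneEdge3_vals, hz j]
      decide
    rw [if_pos hc, collapse3_edge]
    exact FG_agree hHF nm β hz b
  · have hex : ∃ j, stdSimplex.asOrderHom β j = 1 := by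
      by_contra hcon
      push_neg at hcon
      exact hz (fun j => by rcases fin2_zero_or_one (stdSimplex.asOrderHom β j) with h' | h'
                            · exact h'
                            · exact absurd h' (hcon j))
    obtain ⟨j₀, hj₀⟩ := hex
    have hc : ¬(∀ j, (stdSimplex.asOrderHom (((coneEdge 3 3 (by decide)).app (op nm.unop.1) β).1) j : ℕ) ≤ 1) := by
      intro hcon
      have h5 := hcon j₀
      rw [coneEdge3_vals, hj₀] at h5
      exact absurd h5 (by decide)
    have hc2 : ¬(∀ j, (stdSimplex.asOrderHom (((coneEdge 3 3 (by decide)).app (op nm.unop.1) β).1) j : ℕ) ≤ 2) := by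
      intro hcon
      have h5 := hcon j₀
      rw [coneEdge3_vals, hj₀] at h5
      exact absurd h5 (by decide)
    rw [if_neg hc, if_neg hc2, collapse3_edge]

/-- The two cone edges agree on the vertex 0. -/
lemma vert0_coneEdge (i i' : Fin 3) (hi : i ≠ 0) (hi' : i' ≠ 0) :
    vert0 ≫ coneEdge 2 i hi = vert0 ≫ coneEdge 2 i' hi' := by
  ext m x
  apply Subtype.ext
  apply (stdSimplex.objEquiv).injective
  apply simplexHomEq
  intro j
  show stdSimplex.asOrderHom (((coneEdge 2 i hi).app m (vert0.app m x)).1) j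
    = stdSimplex.asOrderHom (((coneEdge 2 i' hi').app m (vert0.app m x)).1) j
  have hv : ∀ (k : Fin 3) (hk : k ≠ 0), stdSimplex.asOrderHom (((coneEdge 2 k hk).app m (vert0.app m x)).1) j
      = (mkOfLe (0 : Fin 3) k (Fin.zero_le k)).toOrderHom
        ((SimplexCategory.δ (1 : Fin 2)).toOrderHom (stdSimplex.asOrderHom x j)) := fun _ _ => rfl
  rw [hv i hi, hv i' hi']
  have h0 : stdSimplex.asOrderHom x j = 0 := Fin.ext (by omega)
  rw [h0]
  rfl

/-- Two maps `C₂ □ B → X` that agree on both edges are equal. -/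
lemma pair_vertexEq {X : BSSet} {B : SSet.{0}} (a b : box (coneSub 2).toFunctor B ⟶ X)
    (hF : boxHomLeft (coneEdge 2 2 (by decide)) B ≫ a
        = boxHomLeft (coneEdge 2 2 (by decide)) B ≫ b)
    (hG : boxHomLeft (coneEdge 2 1 (by decide)) B ≫ a
        = boxHomLeft (coneEdge 2 1 (by decide)) B ≫ b) :
    a = b := by
  have h : boxHomLeft vert0 B ≫ (boxHomLeft (coneEdge 2 2 (by decide)) B ≫ a)
      = boxHomLeft vert0 B ≫ (boxHomLeft (coneEdge 2 1 (by decide)) B ≫ a) := by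
    have h1 : boxHomLeft vert0 B ≫ boxHomLeft (coneEdge 2 2 (by decide)) B
        = boxHomLeft (vert0 ≫ coneEdge 2 2 (by decide)) B := rfl
    have h2 : boxHomLeft vert0 B ≫ boxHomLeft (coneEdge 2 1 (by decide)) B
        = boxHomLeft (vert0 ≫ coneEdge 2 1 (by decide)) B := rfl
    erw [← Category.assoc, ← Category.assoc, h1, h2,
      vert0_coneEdge 2 1 (by decide) (by decide)]
  have ha := eq_pairMap h a rfl rfl
  have hb := eq_pairMap h b hF.symm hG.symm
  rw [ha, hb]

/-- A trivial Kan fibration is surjective on vertices. -/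
lemma surj_vert {S T : SSet.{0}} {p : S ⟶ T} (hp : TrivialKanFibration p) (t : vert T) :
    ∃ s : vert S, p.app (op ⦋0⦌) s = t := by
  have hlp : HasLiftingProperty (∂Δ[0].ι) p := hp 0
  have hempty : ∀ (m : SimplexCategoryᵒᵖ) (α : (∂Δ[0] : SSet.{0}).obj m), False := by
    intro m α
    exact α.2 (fun b => ⟨0, Fin.ext (by omega)⟩)
  let topMap : (∂Δ[0] : SSet.{0}) ⟶ S :=
    { app := fun m => ↾fun α => (hempty m α).elim
      naturality := fun m m' g => by
        ext α
        exact (hempty m α).elim }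
  have hsq : CommSq topMap (∂Δ[0].ι) p (vtxMap t) := by
    constructor
    ext m α
  obtain ⟨⟨⟨L, _, hL2⟩⟩⟩ := hlp.sq_hasLift hsq
  refine ⟨L.app (op ⦋0⦌) (stdSimplex.objEquiv.symm (𝟙 ⦋0⦌) : Δ[0] _⦋0⦌), ?_⟩
  have h2 := ConcreteCategory.congr_hom (NatTrans.congr_app hL2 (op (⦋0⦌ : SimplexCategory))) (stdSimplex.objEquiv.symm (𝟙 ⦋0⦌) : Δ[0] _⦋0⦌)
  exact h2.trans (vtxMap_app₀ t _)

/-- An edge between two vertices gives equality in `π₀`. -/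
lemma hSim_of_edge {S : SSet.{0}} {a b : vert S} (e : S.obj (op ⦋1⦌))
    (h1 : SimplicialObject.δ S 1 e = a) (h2 : SimplicialObject.δ S 0 e = b) :
    hSim S a b :=
  Relation.EqvGen.rel _ _ ⟨e, h1, h2⟩

end Frac
namespace Frac
open SimplexCategory

lemma mapEq {a b : SimplexCategory} (u v : a ⟶ b)
    (h : ∀ j, u.toOrderHom j = v.toOrderHom j) :
    SSet.stdSimplex.map u = SSet.stdSimplex.map v :=
  congrArg _ (simplexHomEq h)

/-- Push an edge forward along a simplicial map. -/
lemma push_edge {S T : SSet.{0}} (μ : S ⟶ T) (e : S.obj (op ⦋1⦌)) {a b : vert S}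
    (h1 : SimplicialObject.δ S 1 e = a) (h0 : SimplicialObject.δ S 0 e = b) :
    hSim T (μ.app (op ⦋0⦌) a) (μ.app (op ⦋0⦌) b) := by
  refine hSim_of_edge (μ.app (op ⦋1⦌) e) ?_ ?_
  · rw [← h1]
    exact (NatTrans.naturality_apply μ (SimplexCategory.δ (1 : Fin 2)).op e).symm
  · rw [← h0]
    exact (NatTrans.naturality_apply μ (SimplexCategory.δ (0 : Fin 2)).op e).symm

lemma vert0_agree {X : BSSet} {B : SSet.{0}} (w : box (coneSub 2).toFunctor B ⟶ X) :
    boxHomLeft vert0 B ≫ (boxHomLeft (coneEdge 2 2 (by decide)) B ≫ w)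
      = boxHomLeft vert0 B ≫ (boxHomLeft (coneEdge 2 1 (by decide)) B ≫ w) := by
  have h1 : boxHomLeft vert0 B ≫ boxHomLeft (coneEdge 2 2 (by decide)) B
      = boxHomLeft (vert0 ≫ coneEdge 2 2 (by decide)) B := rfl
  have h2 : boxHomLeft vert0 B ≫ boxHomLeft (coneEdge 2 1 (by decide)) B
      = boxHomLeft (vert0 ≫ coneEdge 2 1 (by decide)) B := rfl
  erw [← Category.assoc, ← Category.assoc, h1, h2, vert0_coneEdge 2 1 (by decide) (by decide)]

section Probes
variable (X : BSSet) (μ₂ : slash (coneSub 2).toFunctor X ⟶ col 2 X)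

example (f : vert (col 1 X)) : box Δ[1] Δ[0] ⟶ X := f
example (f g : vert (col 1 X)) (hfg : dV X 1 f = dV X 1 g) :
    boxHomLeft vert0 Δ[0] ≫ (f : box Δ[1] Δ[0] ⟶ X) = boxHomLeft vert0 Δ[0] ≫ g := hfg
example (w : vert (slash (coneSub 2).toFunctor X)) :
    eF X w = boxHomLeft (coneEdge 2 2 (by decide)) Δ[0] ≫ (w : box (coneSub 2).toFunctor Δ[0] ⟶ X) := rfl
example (w : vert (slash (coneSub 2).toFunctor X)) :
    fracV X μ₂ w = boxHomLeft (SSet.stdSimplex.map (SimplexCategory.δ (0 : Fin 3))) Δ[0]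
      ≫ (μ₂.app (op ⦋0⦌) w : box Δ[2] Δ[0] ⟶ X) := rfl
example : coneEdge 2 1 (by decide) ≫ (coneSub 2).ι
    = SSet.stdSimplex.map (mkOfLe (0 : Fin 3) 1 (by decide)) := rfl
example : coneEdge 3 2 (by decide) ≫ (coneSub 3).ι
    = SSet.stdSimplex.map (mkOfLe (0 : Fin 4) 2 (by decide)) := rfl
example {A : SSet.{0}} (u : Δ[0] ⟶ A) (φ : A ⟶ Δ[2]) (σ : box Δ[2] Δ[0] ⟶ X) :
    boxHomLeft u Δ[0] ≫ boxHomLeft φ Δ[0] ≫ σ = boxHomLeft (u ≫ φ) Δ[0] ≫ σ := rfl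
example (σ : box Δ[1] Δ[0] ⟶ X) : boxHomLeft (𝟙 Δ[1]) Δ[0] ≫ σ = σ := rfl
example {A A' B B' : SSet.{0}} (f : A ⟶ A') (g : B ⟶ B') (t : box A' B' ⟶ X) :
    boxHomLeft f B ≫ (boxFunctor A').map g ≫ t = (boxFunctor A).map g ≫ boxHomLeft f B' ≫ t := rfl
example (w : vert (slash (coneSub 2).toFunctor X)) :
    (slash (coneSub 2).toFunctor X).map (toZero ⦋1⦌).op w
      = (boxFunctor (coneSub 2).toFunctor).map (SSet.stdSimplex.map (toZero ⦋1⦌))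
        ≫ (w : box (coneSub 2).toFunctor Δ[0] ⟶ X) := rfl
example (e : (col 2 X).obj (op ⦋1⦌)) :
    SimplicialObject.δ (col 2 X) 1 e
      = (boxFunctor Δ[2]).map (SSet.stdSimplex.map (SimplexCategory.δ (1 : Fin 2)))
        ≫ (e : box Δ[2] Δ[1] ⟶ X) := rfl
end Probes

end Frac

open SimplexCategory Frac

/-- Let `X` be a Bousfield-Segal space and `μ₂` a section of the acyclic Kan
fibration `β₂ = c₂\X`, with fraction operation `f/g := d₀ (μ₂ (f, g))` on vertices. Then the
fraction operation restricts to a map `X₁(x,y) × X₁(x,z) → X₁(z,y)` on hom-spaces, and, writing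
`∼` for equality of classes in `π₀`:
(1) `f/f ∼ 1_y` for every vertex `f` of `X₁(x,y)`;
(2) `f/1_x ∼ f` for every vertex `f` of `X₁(x,y)`;
(3) `f/g ∼ (f/h)/(g/h)` for every compatible triple `(f,g,h)` of vertices of `X₁`.
Here pairs `(f,g)` of vertices of `X₁` with `d₁ f = d₁ g` are identified with vertices `w` of
`C₂\X` via the restrictions `eF`, `eG` along the two edges of `C₂` (a bijective correspondence,
recorded by the first clause). -/
theorem fraction_operation_properties (X : BSSet) (hX : IsBSegal X)
    (μ₂ : slash (coneSub 2).toFunctor X ⟶ col 2 X)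
    (hμ₂ : μ₂ ≫ bousfieldMap 2 X = 𝟙 (slash (coneSub 2).toFunctor X)) :
    (∀ f g : vert (col 1 X), dV X 1 f = dV X 1 g →
      ∃! w : vert (slash (coneSub 2).toFunctor X), eF X w = f ∧ eG X w = g) ∧
    (∀ (x y z : vert (col 0 X)) (w : vert (slash (coneSub 2).toFunctor X)),
      dV X 1 (eF X w) = x → dV X 0 (eF X w) = y →
      dV X 1 (eG X w) = x → dV X 0 (eG X w) = z →
      dV X 1 (fracV X μ₂ w) = z ∧ dV X 0 (fracV X μ₂ w) = y) ∧
    (∀ w : vert (slash (coneSub 2).toFunctor X), eF X w = eG X w →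
      hSim (col 1 X) (fracV X μ₂ w) (oneV X (dV X 0 (eF X w)))) ∧
    (∀ w : vert (slash (coneSub 2).toFunctor X), eG X w = oneV X (dV X 1 (eF X w)) →
      hSim (col 1 X) (fracV X μ₂ w) (eF X w)) ∧
    (∀ w₁ w₂ w₃ w₄ : vert (slash (coneSub 2).toFunctor X),
      eF X w₂ = eF X w₁ → eF X w₃ = eG X w₁ → eG X w₂ = eG X w₃ →
      eF X w₄ = fracV X μ₂ w₂ → eG X w₄ = fracV X μ₂ w₃ →
      hSim (col 1 X) (fracV X μ₂ w₁) (fracV X μ₂ w₄)) := by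
  have hβ₂ := bousfield_trivialFib X hX 2 le_rfl
  have hβ₃ := bousfield_trivialFib X hX 3 (by omega)
  have hmu : ∀ w : vert (slash (coneSub 2).toFunctor X),
      (bousfieldMap 2 X).app (op (⦋0⦌ : SimplexCategory)) (μ₂.app (op ⦋0⦌) w) = w :=
    fun w => ConcreteCategory.congr_hom (NatTrans.congr_app hμ₂ (op ⦋0⦌)) w
  refine ⟨?_, ?_, ?_, ?_, ?_⟩
  · -- Clause 1
    intro f g hfg
    have h : boxHomLeft vert0 Δ[0] ≫ (f : box Δ[1] Δ[0] ⟶ X)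
        = boxHomLeft vert0 Δ[0] ≫ (g : box Δ[1] Δ[0] ⟶ X) := hfg
    exact ⟨pairMap f g h, ⟨pairMap_eF f g h, pairMap_eG f g h⟩,
      fun w hw => eq_pairMap h w hw.1 hw.2⟩
  · -- Clause 2
    intro x y z w hx hy hx' hz'
    constructor
    · have hcomp : vert0 ≫ SSet.stdSimplex.map (SimplexCategory.δ (0 : Fin 3))
          = SSet.stdSimplex.map (SimplexCategory.δ (0 : Fin 2))
            ≫ (coneEdge 2 1 (by decide) ≫ (coneSub 2).ι) := by
        show SSet.stdSimplex.map (SimplexCategory.δ (1 : Fin 2))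
            ≫ SSet.stdSimplex.map (SimplexCategory.δ (0 : Fin 3))
          = SSet.stdSimplex.map (SimplexCategory.δ (0 : Fin 2))
            ≫ SSet.stdSimplex.map (mkOfLe (0 : Fin 3) 1 (by decide))
        erw [← Functor.map_comp, ← Functor.map_comp]
        exact mapEq _ _ (by decide)
      calc dV X 1 (fracV X μ₂ w)
          = (show vert (col 0 X) from boxHomLeft (vert0 ≫ SSet.stdSimplex.map (SimplexCategory.δ (0 : Fin 3))) Δ[0]
            ≫ (μ₂.app (op ⦋0⦌) w : box Δ[2] Δ[0] ⟶ X)) := rfl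
        _ = (show vert (col 0 X) from boxHomLeft (SSet.stdSimplex.map (SimplexCategory.δ (0 : Fin 2))
              ≫ (coneEdge 2 1 (by decide) ≫ (coneSub 2).ι)) Δ[0]
            ≫ (μ₂.app (op ⦋0⦌) w : box Δ[2] Δ[0] ⟶ X)) := by erw [hcomp]
        _ = dV X 0 (eG X ((bousfieldMap 2 X).app (op ⦋0⦌) (μ₂.app (op ⦋0⦌) w))) := rfl
        _ = dV X 0 (eG X w) := by rw [hmu w]
        _ = z := hz'
    · have hcomp : SSet.stdSimplex.map (SimplexCategory.δ (0 : Fin 2))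
          ≫ SSet.stdSimplex.map (SimplexCategory.δ (0 : Fin 3))
          = SSet.stdSimplex.map (SimplexCategory.δ (0 : Fin 2))
            ≫ (coneEdge 2 2 (by decide) ≫ (coneSub 2).ι) := by
        show _ = SSet.stdSimplex.map (SimplexCategory.δ (0 : Fin 2))
            ≫ SSet.stdSimplex.map (mkOfLe (0 : Fin 3) 2 (by decide))
        erw [← Functor.map_comp, ← Functor.map_comp]
        exact mapEq _ _ (by decide)
      calc dV X 0 (fracV X μ₂ w)
          = (show vert (col 0 X) from boxHomLeft (SSet.stdSimplex.map (SimplexCategory.δ (0 : Fin 2))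
              ≫ SSet.stdSimplex.map (SimplexCategory.δ (0 : Fin 3))) Δ[0]
            ≫ (μ₂.app (op ⦋0⦌) w : box Δ[2] Δ[0] ⟶ X)) := rfl
        _ = (show vert (col 0 X) from boxHomLeft (SSet.stdSimplex.map (SimplexCategory.δ (0 : Fin 2))
              ≫ (coneEdge 2 2 (by decide) ≫ (coneSub 2).ι)) Δ[0]
            ≫ (μ₂.app (op ⦋0⦌) w : box Δ[2] Δ[0] ⟶ X)) := by erw [hcomp]
        _ = dV X 0 (eF X ((bousfieldMap 2 X).app (op ⦋0⦌) (μ₂.app (op ⦋0⦌) w))) := rfl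
        _ = dV X 0 (eF X w) := by rw [hmu w]
        _ = y := hy
  · -- Clause 3
    intro w hw
    have hc2 : (coneEdge 2 2 (by decide) ≫ (coneSub 2).ι)
        ≫ SSet.stdSimplex.map (SimplexCategory.σ (1 : Fin 2)) = 𝟙 Δ[1] := by
      show SSet.stdSimplex.map (mkOfLe (0 : Fin 3) 2 (by decide)) ≫ _ = _
      erw [← Functor.map_comp, mapEq _ (𝟙 (⦋1⦌ : SimplexCategory)) (by decide)]
      exact CategoryTheory.Functor.map_id _ _
    have hc1 : (coneEdge 2 1 (by decide) ≫ (coneSub 2).ι)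
        ≫ SSet.stdSimplex.map (SimplexCategory.σ (1 : Fin 2)) = 𝟙 Δ[1] := by
      show SSet.stdSimplex.map (mkOfLe (0 : Fin 3) 1 (by decide)) ≫ _ = _
      erw [← Functor.map_comp, mapEq _ (𝟙 (⦋1⦌ : SimplexCategory)) (by decide)]
      exact CategoryTheory.Functor.map_id _ _
    set σs : box Δ[2] Δ[0] ⟶ X :=
      boxHomLeft (SSet.stdSimplex.map (SimplexCategory.σ (1 : Fin 2))) Δ[0]
        ≫ (eF X w : box Δ[1] Δ[0] ⟶ X) with hσs
    have hFa : boxHomLeft (coneEdge 2 2 (by decide)) Δ[0]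
          ≫ (boxHomLeft (coneSub 2).ι Δ[0] ≫ σs)
        = boxHomLeft (coneEdge 2 2 (by decide)) Δ[0] ≫ (w : box (coneSub 2).toFunctor Δ[0] ⟶ X) := by
      calc boxHomLeft (coneEdge 2 2 (by decide)) Δ[0] ≫ (boxHomLeft (coneSub 2).ι Δ[0] ≫ σs)
          = boxHomLeft ((coneEdge 2 2 (by decide) ≫ (coneSub 2).ι)
              ≫ SSet.stdSimplex.map (SimplexCategory.σ (1 : Fin 2))) Δ[0]
            ≫ (eF X w : box Δ[1] Δ[0] ⟶ X) := rfl
        _ = boxHomLeft (𝟙 Δ[1]) Δ[0] ≫ (eF X w : box Δ[1] Δ[0] ⟶ X) := by rw [hc2]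
        _ = boxHomLeft (coneEdge 2 2 (by decide)) Δ[0] ≫ (w : _ ⟶ X) := rfl
    have hGa : boxHomLeft (coneEdge 2 1 (by decide)) Δ[0]
          ≫ (boxHomLeft (coneSub 2).ι Δ[0] ≫ σs)
        = boxHomLeft (coneEdge 2 1 (by decide)) Δ[0] ≫ (w : box (coneSub 2).toFunctor Δ[0] ⟶ X) := by
      calc boxHomLeft (coneEdge 2 1 (by decide)) Δ[0] ≫ (boxHomLeft (coneSub 2).ι Δ[0] ≫ σs)
          = boxHomLeft ((coneEdge 2 1 (by decide) ≫ (coneSub 2).ι)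
              ≫ SSet.stdSimplex.map (SimplexCategory.σ (1 : Fin 2))) Δ[0]
            ≫ (eF X w : box Δ[1] Δ[0] ⟶ X) := rfl
        _ = boxHomLeft (𝟙 Δ[1]) Δ[0] ≫ (eF X w : box Δ[1] Δ[0] ⟶ X) := by rw [hc1]
        _ = (show (boxFunctor Δ[1]).obj Δ[0] ⟶ X from eF X w) := rfl
        _ = (show (boxFunctor Δ[1]).obj Δ[0] ⟶ X from eG X w) := by rw [hw]
        _ = boxHomLeft (coneEdge 2 1 (by decide)) Δ[0] ≫ (w : _ ⟶ X) := rfl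
    have hβs : (bousfieldMap 2 X).app (op (⦋0⦌ : SimplexCategory)) σs = w :=
      pair_vertexEq _ _ hFa hGa
    obtain ⟨e, he1, he0, -⟩ := fiber_edge hβ₂ (μ₂.app (op ⦋0⦌) w) σs ((hmu w).trans hβs.symm)
    have hb : (colδ 0 X).app (op (⦋0⦌ : SimplexCategory)) σs = oneV X (dV X 0 (eF X w)) := by
      show boxHomLeft (SSet.stdSimplex.map (SimplexCategory.δ (0 : Fin 3))
          ≫ SSet.stdSimplex.map (SimplexCategory.σ (1 : Fin 2))) Δ[0]
        ≫ (eF X w : box Δ[1] Δ[0] ⟶ X)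
        = boxHomLeft (SSet.stdSimplex.map (SimplexCategory.σ (0 : Fin 1))
          ≫ SSet.stdSimplex.map (SimplexCategory.δ (0 : Fin 2))) Δ[0]
        ≫ (eF X w : box Δ[1] Δ[0] ⟶ X)
      erw [← Functor.map_comp, ← Functor.map_comp,
        mapEq (SimplexCategory.δ (0 : Fin 3) ≫ SimplexCategory.σ (1 : Fin 2))
          (SimplexCategory.σ (0 : Fin 1) ≫ SimplexCategory.δ (0 : Fin 2)) (by decide)]
    have hpush := push_edge (colδ 0 X) e he1 he0
    rw [hb] at hpush
    exact hpush
  · -- Clause 4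
    intro w hw
    have hc2 : (coneEdge 2 2 (by decide) ≫ (coneSub 2).ι)
        ≫ SSet.stdSimplex.map (SimplexCategory.σ (0 : Fin 2)) = 𝟙 Δ[1] := by
      show SSet.stdSimplex.map (mkOfLe (0 : Fin 3) 2 (by decide)) ≫ _ = _
      erw [← Functor.map_comp, mapEq _ (𝟙 (⦋1⦌ : SimplexCategory)) (by decide)]
      exact CategoryTheory.Functor.map_id _ _
    set σs : box Δ[2] Δ[0] ⟶ X :=
      boxHomLeft (SSet.stdSimplex.map (SimplexCategory.σ (0 : Fin 2))) Δ[0]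
        ≫ (eF X w : box Δ[1] Δ[0] ⟶ X) with hσs
    have hFa : boxHomLeft (coneEdge 2 2 (by decide)) Δ[0]
          ≫ (boxHomLeft (coneSub 2).ι Δ[0] ≫ σs)
        = boxHomLeft (coneEdge 2 2 (by decide)) Δ[0] ≫ (w : box (coneSub 2).toFunctor Δ[0] ⟶ X) := by
      calc boxHomLeft (coneEdge 2 2 (by decide)) Δ[0] ≫ (boxHomLeft (coneSub 2).ι Δ[0] ≫ σs)
          = boxHomLeft ((coneEdge 2 2 (by decide) ≫ (coneSub 2).ι)
              ≫ SSet.stdSimplex.map (SimplexCategory.σ (0 : Fin 2))) Δ[0]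
            ≫ (eF X w : box Δ[1] Δ[0] ⟶ X) := rfl
        _ = boxHomLeft (𝟙 Δ[1]) Δ[0] ≫ (eF X w : box Δ[1] Δ[0] ⟶ X) := by rw [hc2]
        _ = boxHomLeft (coneEdge 2 2 (by decide)) Δ[0] ≫ (w : _ ⟶ X) := rfl
    have hGa : boxHomLeft (coneEdge 2 1 (by decide)) Δ[0]
          ≫ (boxHomLeft (coneSub 2).ι Δ[0] ≫ σs)
        = boxHomLeft (coneEdge 2 1 (by decide)) Δ[0] ≫ (w : box (coneSub 2).toFunctor Δ[0] ⟶ X) := by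
      have hc1 : (coneEdge 2 1 (by decide) ≫ (coneSub 2).ι)
          ≫ SSet.stdSimplex.map (SimplexCategory.σ (0 : Fin 2))
          = SSet.stdSimplex.map (SimplexCategory.σ (0 : Fin 1))
            ≫ SSet.stdSimplex.map (SimplexCategory.δ (1 : Fin 2)) := by
        show SSet.stdSimplex.map (mkOfLe (0 : Fin 3) 1 (by decide)) ≫ _ = _
        erw [← Functor.map_comp, ← Functor.map_comp]
        exact mapEq _ _ (by decide)
      calc boxHomLeft (coneEdge 2 1 (by decide)) Δ[0] ≫ (boxHomLeft (coneSub 2).ι Δ[0] ≫ σs)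
          = boxHomLeft ((coneEdge 2 1 (by decide) ≫ (coneSub 2).ι)
              ≫ SSet.stdSimplex.map (SimplexCategory.σ (0 : Fin 2))) Δ[0]
            ≫ (eF X w : box Δ[1] Δ[0] ⟶ X) := rfl
        _ = boxHomLeft (SSet.stdSimplex.map (SimplexCategory.σ (0 : Fin 1))
              ≫ SSet.stdSimplex.map (SimplexCategory.δ (1 : Fin 2))) Δ[0]
            ≫ (eF X w : box Δ[1] Δ[0] ⟶ X) := by rw [hc1]
        _ = (show (boxFunctor Δ[1]).obj Δ[0] ⟶ X from oneV X (dV X 1 (eF X w))) := rfl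
        _ = (show (boxFunctor Δ[1]).obj Δ[0] ⟶ X from eG X w) := by rw [hw]
        _ = boxHomLeft (coneEdge 2 1 (by decide)) Δ[0] ≫ (w : _ ⟶ X) := rfl
    have hβs : (bousfieldMap 2 X).app (op (⦋0⦌ : SimplexCategory)) σs = w :=
      pair_vertexEq _ _ hFa hGa
    obtain ⟨e, he1, he0, -⟩ := fiber_edge hβ₂ (μ₂.app (op ⦋0⦌) w) σs ((hmu w).trans hβs.symm)
    have hb : (colδ 0 X).app (op (⦋0⦌ : SimplexCategory)) σs = eF X w := by
      show boxHomLeft (SSet.stdSimplex.map (SimplexCategory.δ (0 : Fin 3))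
          ≫ SSet.stdSimplex.map (SimplexCategory.σ (0 : Fin 2))) Δ[0]
        ≫ (eF X w : box Δ[1] Δ[0] ⟶ X) = (eF X w : box Δ[1] Δ[0] ⟶ X)
      erw [← Functor.map_comp, mapEq _ (𝟙 (⦋1⦌ : SimplexCategory)) (by decide),
        CategoryTheory.Functor.map_id]
      rfl
    have hpush := push_edge (colδ 0 X) e he1 he0
    rw [hb] at hpush
    exact hpush
  · -- Clause 5
    intro w₁ w₂ w₃ w₄ h21 h31 h23 h44 h43
    -- agreement of the three edges at the vertex 0
    have hHG : boxHomLeft vert0 Δ[0] ≫ (eG X w₂ : box Δ[1] Δ[0] ⟶ X)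
        = boxHomLeft vert0 Δ[0] ≫ (eG X w₁ : box Δ[1] Δ[0] ⟶ X) := by
      calc boxHomLeft vert0 Δ[0] ≫ (eG X w₂ : box Δ[1] Δ[0] ⟶ X)
          = boxHomLeft vert0 Δ[0]
            ≫ (boxHomLeft (coneEdge 2 1 (by decide)) Δ[0] ≫ (w₂ : _ ⟶ X)) := rfl
        _ = boxHomLeft vert0 Δ[0]
            ≫ (boxHomLeft (coneEdge 2 2 (by decide)) Δ[0] ≫ (w₂ : _ ⟶ X)) := (vert0_agree w₂).symm
        _ = boxHomLeft vert0 Δ[0] ≫ (eF X w₂ : box Δ[1] Δ[0] ⟶ X) := rfl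
        _ = boxHomLeft vert0 Δ[0] ≫ (eF X w₁ : box Δ[1] Δ[0] ⟶ X) := by rw [h21]
        _ = boxHomLeft vert0 Δ[0]
            ≫ (boxHomLeft (coneEdge 2 2 (by decide)) Δ[0] ≫ (w₁ : _ ⟶ X)) := rfl
        _ = boxHomLeft vert0 Δ[0]
            ≫ (boxHomLeft (coneEdge 2 1 (by decide)) Δ[0] ≫ (w₁ : _ ⟶ X)) := vert0_agree w₁
        _ = boxHomLeft vert0 Δ[0] ≫ (eG X w₁ : box Δ[1] Δ[0] ⟶ X) := rfl
    have hHF : boxHomLeft vert0 Δ[0] ≫ (eG X w₂ : box Δ[1] Δ[0] ⟶ X)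
        = boxHomLeft vert0 Δ[0] ≫ (eF X w₁ : box Δ[1] Δ[0] ⟶ X) := by
      calc boxHomLeft vert0 Δ[0] ≫ (eG X w₂ : box Δ[1] Δ[0] ⟶ X)
          = boxHomLeft vert0 Δ[0]
            ≫ (boxHomLeft (coneEdge 2 1 (by decide)) Δ[0] ≫ (w₂ : _ ⟶ X)) := rfl
        _ = boxHomLeft vert0 Δ[0]
            ≫ (boxHomLeft (coneEdge 2 2 (by decide)) Δ[0] ≫ (w₂ : _ ⟶ X)) := (vert0_agree w₂).symm
        _ = boxHomLeft vert0 Δ[0] ≫ (eF X w₂ : box Δ[1] Δ[0] ⟶ X) := rfl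
        _ = boxHomLeft vert0 Δ[0] ≫ (eF X w₁ : box Δ[1] Δ[0] ⟶ X) := by rw [h21]
    obtain ⟨τ, hτ⟩ := surj_vert hβ₃ (tripleMap (eF X w₁) (eG X w₁) (eG X w₂) hHG hHF
      : vert (slash (coneSub 3).toFunctor X))
    have hτ' : boxHomLeft (coneSub 3).ι Δ[0] ≫ (τ : box Δ[3] Δ[0] ⟶ X)
        = tripleMap (eF X w₁) (eG X w₁) (eG X w₂) hHG hHF := hτ
    -- the three initial edges of τ
    have hedge : ∀ (i : Fin 4) (hi : i ≠ 0) (E : box Δ[1] Δ[0] ⟶ X),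
        boxHomLeft (coneEdge 3 i hi) Δ[0]
            ≫ tripleMap (eF X w₁) (eG X w₁) (eG X w₂) hHG hHF = E →
        boxHomLeft (SSet.stdSimplex.map (mkOfLe (0 : Fin 4) i (Fin.zero_le i))) Δ[0]
          ≫ (τ : box Δ[3] Δ[0] ⟶ X) = E := by
      intro i hi E hres
      calc boxHomLeft (SSet.stdSimplex.map (mkOfLe (0 : Fin 4) i (Fin.zero_le i))) Δ[0]
            ≫ (τ : box Δ[3] Δ[0] ⟶ X)
          = boxHomLeft (coneEdge 3 i hi) Δ[0]
            ≫ (boxHomLeft (coneSub 3).ι Δ[0] ≫ (τ : box Δ[3] Δ[0] ⟶ X)) := rfl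
        _ = boxHomLeft (coneEdge 3 i hi) Δ[0]
            ≫ tripleMap (eF X w₁) (eG X w₁) (eG X w₂) hHG hHF := by rw [hτ']
        _ = (show (boxFunctor Δ[1]).obj Δ[0] ⟶ X from E) := hres
    have hedge3 := hedge 3 (by decide) _ (tripleMap_e3 (eF X w₁) (eG X w₁) (eG X w₂) hHG hHF)
    have hedge2 := hedge 2 (by decide) _ (tripleMap_e2 (eF X w₁) (eG X w₁) (eG X w₂) hHG hHF)
    have hedge1 := hedge 1 (by decide) _ (tripleMap_e1 (eF X w₁) (eG X w₁) (eG X w₂) hHG hHF)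
    -- folding helper: an initial edge of a face of τ is an initial edge of τ
    have hfold : ∀ (i : Fin 3) (hi : i ≠ 0) (k : Fin 4) (a : Fin 4)
        (hcomp : ∀ l, (mkOfLe (0 : Fin 3) i (Fin.zero_le i) ≫ SimplexCategory.δ k).toOrderHom l
          = (mkOfLe (0 : Fin 4) a (Fin.zero_le a)).toOrderHom l) (E : box Δ[1] Δ[0] ⟶ X),
        boxHomLeft (SSet.stdSimplex.map (mkOfLe (0 : Fin 4) a (Fin.zero_le a))) Δ[0]
            ≫ (τ : box Δ[3] Δ[0] ⟶ X) = E →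
        boxHomLeft (coneEdge 2 i hi) Δ[0]
          ≫ (boxHomLeft (coneSub 2).ι Δ[0]
            ≫ (boxHomLeft (SSet.stdSimplex.map (SimplexCategory.δ k)) Δ[0]
              ≫ (τ : box Δ[3] Δ[0] ⟶ X))) = E := by
      intro i hi k a hcomp E hres
      calc boxHomLeft (coneEdge 2 i hi) Δ[0]
            ≫ (boxHomLeft (coneSub 2).ι Δ[0]
              ≫ (boxHomLeft (SSet.stdSimplex.map (SimplexCategory.δ k)) Δ[0]
                ≫ (τ : box Δ[3] Δ[0] ⟶ X)))
          = boxHomLeft (SSet.stdSimplex.map (mkOfLe (0 : Fin 3) i (Fin.zero_le i))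
              ≫ SSet.stdSimplex.map (SimplexCategory.δ k)) Δ[0]
            ≫ (τ : box Δ[3] Δ[0] ⟶ X) := rfl
        _ = boxHomLeft (SSet.stdSimplex.map (mkOfLe (0 : Fin 4) a (Fin.zero_le a))) Δ[0]
            ≫ (τ : box Δ[3] Δ[0] ⟶ X) := by
              erw [← Functor.map_comp, mapEq _ (mkOfLe (0 : Fin 4) a (Fin.zero_le a)) hcomp]
        _ = (show (boxFunctor Δ[1]).obj Δ[0] ⟶ X from E) := hres
    -- the three relevant faces of τ lie over w₁, w₂, w₃
    have hβσ₁ : boxHomLeft (coneSub 2).ι Δ[0]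
        ≫ (boxHomLeft (SSet.stdSimplex.map (SimplexCategory.δ (1 : Fin 4))) Δ[0]
          ≫ (τ : box Δ[3] Δ[0] ⟶ X)) = (w₁ : box (coneSub 2).toFunctor Δ[0] ⟶ X) :=
      pair_vertexEq _ _
        (hfold 2 (by decide) 1 3 (by decide) _ hedge3)
        (hfold 1 (by decide) 1 2 (by decide) _ hedge2)
    have hβσ₂ : boxHomLeft (coneSub 2).ι Δ[0]
        ≫ (boxHomLeft (SSet.stdSimplex.map (SimplexCategory.δ (2 : Fin 4))) Δ[0]
          ≫ (τ : box Δ[3] Δ[0] ⟶ X)) = (w₂ : box (coneSub 2).toFunctor Δ[0] ⟶ X) :=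
      pair_vertexEq _ _
        (hfold 2 (by decide) 2 3 (by decide) _ (hedge3.trans h21.symm))
        (hfold 1 (by decide) 2 1 (by decide) _ hedge1)
    have hβσ₃ : boxHomLeft (coneSub 2).ι Δ[0]
        ≫ (boxHomLeft (SSet.stdSimplex.map (SimplexCategory.δ (3 : Fin 4))) Δ[0]
          ≫ (τ : box Δ[3] Δ[0] ⟶ X)) = (w₃ : box (coneSub 2).toFunctor Δ[0] ⟶ X) :=
      pair_vertexEq _ _
        (hfold 2 (by decide) 3 2 (by decide) _ (hedge2.trans h31.symm))
        (hfold 1 (by decide) 3 1 (by decide) _ (hedge1.trans h23))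
    -- fiber edges over w₁, w₂, w₃
    obtain ⟨e₁, he₁a, he₁b, -⟩ := fiber_edge hβ₂ (μ₂.app (op ⦋0⦌) w₁)
      ((boxHomLeft (SSet.stdSimplex.map (SimplexCategory.δ (1 : Fin 4))) Δ[0]
        ≫ (τ : box Δ[3] Δ[0] ⟶ X) : vert (col 2 X))) ((hmu w₁).trans hβσ₁.symm)
    obtain ⟨e₂, he₂a, he₂b, he₂c⟩ := fiber_edge hβ₂ (μ₂.app (op ⦋0⦌) w₂)
      ((boxHomLeft (SSet.stdSimplex.map (SimplexCategory.δ (2 : Fin 4))) Δ[0]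
        ≫ (τ : box Δ[3] Δ[0] ⟶ X) : vert (col 2 X))) ((hmu w₂).trans hβσ₂.symm)
    obtain ⟨e₃, he₃a, he₃b, he₃c⟩ := fiber_edge hβ₂ (μ₂.app (op ⦋0⦌) w₃)
      ((boxHomLeft (SSet.stdSimplex.map (SimplexCategory.δ (3 : Fin 4))) Δ[0]
        ≫ (τ : box Δ[3] Δ[0] ⟶ X) : vert (col 2 X))) ((hmu w₃).trans hβσ₃.symm)
    -- the fiber edges lie over degenerate edges
    have hE2 : boxHomLeft (coneSub 2).ι Δ[1] ≫ (e₂ : box Δ[2] Δ[1] ⟶ X)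
        = (boxFunctor (coneSub 2).toFunctor).map (SSet.stdSimplex.map (toZero ⦋1⦌))
          ≫ (w₂ : box (coneSub 2).toFunctor Δ[0] ⟶ X) := by
      have h' := he₂c
      rw [hmu w₂] at h'
      exact h'
    have hE3 : boxHomLeft (coneSub 2).ι Δ[1] ≫ (e₃ : box Δ[2] Δ[1] ⟶ X)
        = (boxFunctor (coneSub 2).toFunctor).map (SSet.stdSimplex.map (toZero ⦋1⦌))
          ≫ (w₃ : box (coneSub 2).toFunctor Δ[0] ⟶ X) := by
      have h' := he₃c
      rw [hmu w₃] at h'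
      exact h'
    -- vertex-0 agreement between d₀e₂ and d₀e₃
    have hkey : ∀ (e : box Δ[2] Δ[1] ⟶ X) (wc : box (coneSub 2).toFunctor Δ[0] ⟶ X),
        boxHomLeft (coneSub 2).ι Δ[1] ≫ e
          = (boxFunctor (coneSub 2).toFunctor).map (SSet.stdSimplex.map (toZero ⦋1⦌)) ≫ wc →
        boxHomLeft vert0 Δ[1]
          ≫ (boxHomLeft (SSet.stdSimplex.map (SimplexCategory.δ (0 : Fin 3))) Δ[1] ≫ e)
        = (boxFunctor Δ[0]).map (SSet.stdSimplex.map (toZero ⦋1⦌))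
          ≫ (boxHomLeft (SSet.stdSimplex.map (SimplexCategory.δ (0 : Fin 2))) Δ[0]
            ≫ (boxHomLeft (coneEdge 2 1 (by decide)) Δ[0] ≫ wc)) := by
      intro e wc he
      have hsplit : vert0 ≫ SSet.stdSimplex.map (SimplexCategory.δ (0 : Fin 3))
          = SSet.stdSimplex.map (SimplexCategory.δ (0 : Fin 2))
            ≫ (coneEdge 2 1 (by decide) ≫ (coneSub 2).ι) := by
        show SSet.stdSimplex.map (SimplexCategory.δ (1 : Fin 2))
            ≫ SSet.stdSimplex.map (SimplexCategory.δ (0 : Fin 3))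
          = SSet.stdSimplex.map (SimplexCategory.δ (0 : Fin 2))
            ≫ SSet.stdSimplex.map (mkOfLe (0 : Fin 3) 1 (by decide))
        erw [← Functor.map_comp, ← Functor.map_comp]
        exact mapEq _ _ (by decide)
      calc boxHomLeft vert0 Δ[1]
            ≫ (boxHomLeft (SSet.stdSimplex.map (SimplexCategory.δ (0 : Fin 3))) Δ[1] ≫ e)
          = boxHomLeft (vert0 ≫ SSet.stdSimplex.map (SimplexCategory.δ (0 : Fin 3))) Δ[1]
            ≫ e := rfl
        _ = boxHomLeft (SSet.stdSimplex.map (SimplexCategory.δ (0 : Fin 2))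
              ≫ (coneEdge 2 1 (by decide) ≫ (coneSub 2).ι)) Δ[1] ≫ e := by rw [hsplit]
        _ = boxHomLeft (SSet.stdSimplex.map (SimplexCategory.δ (0 : Fin 2))) Δ[1]
              ≫ (boxHomLeft (coneEdge 2 1 (by decide)) Δ[1]
                ≫ (boxHomLeft (coneSub 2).ι Δ[1] ≫ e)) := rfl
        _ = boxHomLeft (SSet.stdSimplex.map (SimplexCategory.δ (0 : Fin 2))) Δ[1]
              ≫ (boxHomLeft (coneEdge 2 1 (by decide)) Δ[1]
                ≫ ((boxFunctor (coneSub 2).toFunctor).map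
                    (SSet.stdSimplex.map (toZero ⦋1⦌)) ≫ wc)) := by rw [he]
        _ = (boxFunctor Δ[0]).map (SSet.stdSimplex.map (toZero ⦋1⦌))
              ≫ (boxHomLeft (SSet.stdSimplex.map (SimplexCategory.δ (0 : Fin 2))) Δ[0]
                ≫ (boxHomLeft (coneEdge 2 1 (by decide)) Δ[0] ≫ wc)) := rfl
    have hagree : boxHomLeft vert0 Δ[1]
          ≫ (boxHomLeft (SSet.stdSimplex.map (SimplexCategory.δ (0 : Fin 3))) Δ[1]
            ≫ (e₂ : box Δ[2] Δ[1] ⟶ X))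
        = boxHomLeft vert0 Δ[1]
          ≫ (boxHomLeft (SSet.stdSimplex.map (SimplexCategory.δ (0 : Fin 3))) Δ[1]
            ≫ (e₃ : box Δ[2] Δ[1] ⟶ X)) := by
      rw [hkey e₂ w₂ hE2, hkey e₃ w₃ hE3]
      have h' : boxHomLeft (coneEdge 2 1 (by decide)) Δ[0]
            ≫ (w₂ : box (coneSub 2).toFunctor Δ[0] ⟶ X)
          = boxHomLeft (coneEdge 2 1 (by decide)) Δ[0]
            ≫ (w₃ : box (coneSub 2).toFunctor Δ[0] ⟶ X) := h23
      rw [h']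
    -- the connecting edge in C₂\X
    have hWF := pairMap_eF _ _ hagree
    have hWG := pairMap_eG _ _ hagree
    -- endpoint 1 of the connecting edge is w₄
    have hv1 : (boxFunctor (coneSub 2).toFunctor).map
          (SSet.stdSimplex.map (SimplexCategory.δ (1 : Fin 2)))
          ≫ pairMap _ _ hagree = (w₄ : box (coneSub 2).toFunctor Δ[0] ⟶ X) := by
      apply pair_vertexEq
      · calc boxHomLeft (coneEdge 2 2 (by decide)) Δ[0]
              ≫ ((boxFunctor (coneSub 2).toFunctor).map
                (SSet.stdSimplex.map (SimplexCategory.δ (1 : Fin 2))) ≫ pairMap _ _ hagree)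
            = (boxFunctor Δ[1]).map (SSet.stdSimplex.map (SimplexCategory.δ (1 : Fin 2)))
              ≫ (boxHomLeft (coneEdge 2 2 (by decide)) Δ[1] ≫ pairMap _ _ hagree) := rfl
          _ = (boxFunctor Δ[1]).map (SSet.stdSimplex.map (SimplexCategory.δ (1 : Fin 2)))
              ≫ (boxHomLeft (SSet.stdSimplex.map (SimplexCategory.δ (0 : Fin 3))) Δ[1]
                ≫ (e₂ : box Δ[2] Δ[1] ⟶ X)) := by rw [hWF]
          _ = boxHomLeft (SSet.stdSimplex.map (SimplexCategory.δ (0 : Fin 3))) Δ[0]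
              ≫ ((boxFunctor Δ[2]).map
                  (SSet.stdSimplex.map (SimplexCategory.δ (1 : Fin 2)))
                ≫ (e₂ : box Δ[2] Δ[1] ⟶ X)) := rfl
          _ = boxHomLeft (SSet.stdSimplex.map (SimplexCategory.δ (0 : Fin 3))) Δ[0]
              ≫ (μ₂.app (op ⦋0⦌) w₂ : box Δ[2] Δ[0] ⟶ X) := by
                rw [show (boxFunctor Δ[2]).map
                    (SSet.stdSimplex.map (SimplexCategory.δ (1 : Fin 2)))
                    ≫ (e₂ : box Δ[2] Δ[1] ⟶ X)
                  = (μ₂.app (op ⦋0⦌) w₂ : box Δ[2] Δ[0] ⟶ X) from he₂a]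
          _ = (show (boxFunctor Δ[1]).obj Δ[0] ⟶ X from fracV X μ₂ w₂) := rfl
          _ = (show (boxFunctor Δ[1]).obj Δ[0] ⟶ X from eF X w₄) := by rw [h44]
          _ = boxHomLeft (coneEdge 2 2 (by decide)) Δ[0]
              ≫ (w₄ : box (coneSub 2).toFunctor Δ[0] ⟶ X) := rfl
      · calc boxHomLeft (coneEdge 2 1 (by decide)) Δ[0]
              ≫ ((boxFunctor (coneSub 2).toFunctor).map
                (SSet.stdSimplex.map (SimplexCategory.δ (1 : Fin 2))) ≫ pairMap _ _ hagree)
            = (boxFunctor Δ[1]).map (SSet.stdSimplex.map (SimplexCategory.δ (1 : Fin 2)))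
              ≫ (boxHomLeft (coneEdge 2 1 (by decide)) Δ[1] ≫ pairMap _ _ hagree) := rfl
          _ = (boxFunctor Δ[1]).map (SSet.stdSimplex.map (SimplexCategory.δ (1 : Fin 2)))
              ≫ (boxHomLeft (SSet.stdSimplex.map (SimplexCategory.δ (0 : Fin 3))) Δ[1]
                ≫ (e₃ : box Δ[2] Δ[1] ⟶ X)) := by rw [hWG]
          _ = boxHomLeft (SSet.stdSimplex.map (SimplexCategory.δ (0 : Fin 3))) Δ[0]
              ≫ ((boxFunctor Δ[2]).map
                  (SSet.stdSimplex.map (SimplexCategory.δ (1 : Fin 2)))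
                ≫ (e₃ : box Δ[2] Δ[1] ⟶ X)) := rfl
          _ = boxHomLeft (SSet.stdSimplex.map (SimplexCategory.δ (0 : Fin 3))) Δ[0]
              ≫ (μ₂.app (op ⦋0⦌) w₃ : box Δ[2] Δ[0] ⟶ X) := by
                rw [show (boxFunctor Δ[2]).map
                    (SSet.stdSimplex.map (SimplexCategory.δ (1 : Fin 2)))
                    ≫ (e₃ : box Δ[2] Δ[1] ⟶ X)
                  = (μ₂.app (op ⦋0⦌) w₃ : box Δ[2] Δ[0] ⟶ X) from he₃a]
          _ = (show (boxFunctor Δ[1]).obj Δ[0] ⟶ X from fracV X μ₂ w₃) := rfl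
          _ = (show (boxFunctor Δ[1]).obj Δ[0] ⟶ X from eG X w₄) := by rw [h43]
          _ = boxHomLeft (coneEdge 2 1 (by decide)) Δ[0]
              ≫ (w₄ : box (coneSub 2).toFunctor Δ[0] ⟶ X) := rfl
    -- endpoint 0 of the connecting edge is β₂(d₀τ)
    have hv0 : (boxFunctor (coneSub 2).toFunctor).map
          (SSet.stdSimplex.map (SimplexCategory.δ (0 : Fin 2)))
          ≫ pairMap _ _ hagree
        = boxHomLeft (coneSub 2).ι Δ[0]
          ≫ (boxHomLeft (SSet.stdSimplex.map (SimplexCategory.δ (0 : Fin 4))) Δ[0]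
            ≫ (τ : box Δ[3] Δ[0] ⟶ X)) := by
      apply pair_vertexEq
      · have hcmp : SSet.stdSimplex.map (SimplexCategory.δ (0 : Fin 3))
            ≫ SSet.stdSimplex.map (SimplexCategory.δ (2 : Fin 4))
            = SSet.stdSimplex.map (mkOfLe (0 : Fin 3) 2 (by decide))
              ≫ SSet.stdSimplex.map (SimplexCategory.δ (0 : Fin 4)) := by
          erw [← Functor.map_comp, ← Functor.map_comp]
          exact mapEq _ _ (by decide)
        calc boxHomLeft (coneEdge 2 2 (by decide)) Δ[0]
              ≫ ((boxFunctor (coneSub 2).toFunctor).map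
                (SSet.stdSimplex.map (SimplexCategory.δ (0 : Fin 2))) ≫ pairMap _ _ hagree)
            = (boxFunctor Δ[1]).map (SSet.stdSimplex.map (SimplexCategory.δ (0 : Fin 2)))
              ≫ (boxHomLeft (coneEdge 2 2 (by decide)) Δ[1] ≫ pairMap _ _ hagree) := rfl
          _ = (boxFunctor Δ[1]).map (SSet.stdSimplex.map (SimplexCategory.δ (0 : Fin 2)))
              ≫ (boxHomLeft (SSet.stdSimplex.map (SimplexCategory.δ (0 : Fin 3))) Δ[1]
                ≫ (e₂ : box Δ[2] Δ[1] ⟶ X)) := by rw [hWF]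
          _ = boxHomLeft (SSet.stdSimplex.map (SimplexCategory.δ (0 : Fin 3))) Δ[0]
              ≫ ((boxFunctor Δ[2]).map
                  (SSet.stdSimplex.map (SimplexCategory.δ (0 : Fin 2)))
                ≫ (e₂ : box Δ[2] Δ[1] ⟶ X)) := rfl
          _ = boxHomLeft (SSet.stdSimplex.map (SimplexCategory.δ (0 : Fin 3))) Δ[0]
              ≫ (boxHomLeft (SSet.stdSimplex.map (SimplexCategory.δ (2 : Fin 4))) Δ[0]
                ≫ (τ : box Δ[3] Δ[0] ⟶ X)) := by
                rw [show (boxFunctor Δ[2]).map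
                    (SSet.stdSimplex.map (SimplexCategory.δ (0 : Fin 2)))
                    ≫ (e₂ : box Δ[2] Δ[1] ⟶ X)
                  = (boxHomLeft (SSet.stdSimplex.map (SimplexCategory.δ (2 : Fin 4))) Δ[0]
                    ≫ (τ : box Δ[3] Δ[0] ⟶ X)) from he₂b]
          _ = boxHomLeft (SSet.stdSimplex.map (SimplexCategory.δ (0 : Fin 3))
                ≫ SSet.stdSimplex.map (SimplexCategory.δ (2 : Fin 4))) Δ[0]
              ≫ (τ : box Δ[3] Δ[0] ⟶ X) := rfl
          _ = boxHomLeft (SSet.stdSimplex.map (mkOfLe (0 : Fin 3) 2 (by decide))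
                ≫ SSet.stdSimplex.map (SimplexCategory.δ (0 : Fin 4))) Δ[0]
              ≫ (τ : box Δ[3] Δ[0] ⟶ X) := by rw [hcmp]
          _ = boxHomLeft (coneEdge 2 2 (by decide)) Δ[0]
              ≫ (boxHomLeft (coneSub 2).ι Δ[0]
                ≫ (boxHomLeft (SSet.stdSimplex.map (SimplexCategory.δ (0 : Fin 4))) Δ[0]
                  ≫ (τ : box Δ[3] Δ[0] ⟶ X))) := rfl
      · have hcmp : SSet.stdSimplex.map (SimplexCategory.δ (0 : Fin 3))
            ≫ SSet.stdSimplex.map (SimplexCategory.δ (3 : Fin 4))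
            = SSet.stdSimplex.map (mkOfLe (0 : Fin 3) 1 (by decide))
              ≫ SSet.stdSimplex.map (SimplexCategory.δ (0 : Fin 4)) := by
          erw [← Functor.map_comp, ← Functor.map_comp]
          exact mapEq _ _ (by decide)
        calc boxHomLeft (coneEdge 2 1 (by decide)) Δ[0]
              ≫ ((boxFunctor (coneSub 2).toFunctor).map
                (SSet.stdSimplex.map (SimplexCategory.δ (0 : Fin 2))) ≫ pairMap _ _ hagree)
            = (boxFunctor Δ[1]).map (SSet.stdSimplex.map (SimplexCategory.δ (0 : Fin 2)))
              ≫ (boxHomLeft (coneEdge 2 1 (by decide)) Δ[1] ≫ pairMap _ _ hagree) := rfl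
          _ = (boxFunctor Δ[1]).map (SSet.stdSimplex.map (SimplexCategory.δ (0 : Fin 2)))
              ≫ (boxHomLeft (SSet.stdSimplex.map (SimplexCategory.δ (0 : Fin 3))) Δ[1]
                ≫ (e₃ : box Δ[2] Δ[1] ⟶ X)) := by rw [hWG]
          _ = boxHomLeft (SSet.stdSimplex.map (SimplexCategory.δ (0 : Fin 3))) Δ[0]
              ≫ ((boxFunctor Δ[2]).map
                  (SSet.stdSimplex.map (SimplexCategory.δ (0 : Fin 2)))
                ≫ (e₃ : box Δ[2] Δ[1] ⟶ X)) := rfl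
          _ = boxHomLeft (SSet.stdSimplex.map (SimplexCategory.δ (0 : Fin 3))) Δ[0]
              ≫ (boxHomLeft (SSet.stdSimplex.map (SimplexCategory.δ (3 : Fin 4))) Δ[0]
                ≫ (τ : box Δ[3] Δ[0] ⟶ X)) := by
                rw [show (boxFunctor Δ[2]).map
                    (SSet.stdSimplex.map (SimplexCategory.δ (0 : Fin 2)))
                    ≫ (e₃ : box Δ[2] Δ[1] ⟶ X)
                  = (boxHomLeft (SSet.stdSimplex.map (SimplexCategory.δ (3 : Fin 4))) Δ[0]
                    ≫ (τ : box Δ[3] Δ[0] ⟶ X)) from he₃b]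
          _ = boxHomLeft (SSet.stdSimplex.map (SimplexCategory.δ (0 : Fin 3))
                ≫ SSet.stdSimplex.map (SimplexCategory.δ (3 : Fin 4))) Δ[0]
              ≫ (τ : box Δ[3] Δ[0] ⟶ X) := rfl
          _ = boxHomLeft (SSet.stdSimplex.map (mkOfLe (0 : Fin 3) 1 (by decide))
                ≫ SSet.stdSimplex.map (SimplexCategory.δ (0 : Fin 4))) Δ[0]
              ≫ (τ : box Δ[3] Δ[0] ⟶ X) := by rw [hcmp]
          _ = boxHomLeft (coneEdge 2 1 (by decide)) Δ[0]
              ≫ (boxHomLeft (coneSub 2).ι Δ[0]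
                ≫ (boxHomLeft (SSet.stdSimplex.map (SimplexCategory.δ (0 : Fin 4))) Δ[0]
                  ≫ (τ : box Δ[3] Δ[0] ⟶ X))) := rfl
    -- fiber edge over β₂(d₀τ)
    obtain ⟨e₀, he₀a, he₀b, -⟩ := fiber_edge hβ₂
      (μ₂.app (op ⦋0⦌) (boxHomLeft (coneSub 2).ι Δ[0]
        ≫ (boxHomLeft (SSet.stdSimplex.map (SimplexCategory.δ (0 : Fin 4))) Δ[0]
          ≫ (τ : box Δ[3] Δ[0] ⟶ X))))
      ((boxHomLeft (SSet.stdSimplex.map (SimplexCategory.δ (0 : Fin 4))) Δ[0]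
        ≫ (τ : box Δ[3] Δ[0] ⟶ X) : vert (col 2 X)))
      (hmu _)
    -- now assemble the chain of edges in X₁
    have s1 : hSim (col 1 X) (fracV X μ₂ w₁)
        ((colδ 0 X).app (op (⦋0⦌ : SimplexCategory))
          (boxHomLeft (SSet.stdSimplex.map (SimplexCategory.δ (1 : Fin 4))) Δ[0]
            ≫ (τ : box Δ[3] Δ[0] ⟶ X))) :=
      push_edge (colδ 0 X) e₁ he₁a he₁b
    have s2 : (colδ 0 X).app (op (⦋0⦌ : SimplexCategory))
          (boxHomLeft (SSet.stdSimplex.map (SimplexCategory.δ (1 : Fin 4))) Δ[0]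
            ≫ (τ : box Δ[3] Δ[0] ⟶ X))
        = (colδ 0 X).app (op (⦋0⦌ : SimplexCategory))
          (boxHomLeft (SSet.stdSimplex.map (SimplexCategory.δ (0 : Fin 4))) Δ[0]
            ≫ (τ : box Δ[3] Δ[0] ⟶ X)) := by
      show boxHomLeft (SSet.stdSimplex.map (SimplexCategory.δ (0 : Fin 3))
            ≫ SSet.stdSimplex.map (SimplexCategory.δ (1 : Fin 4))) Δ[0]
          ≫ (τ : box Δ[3] Δ[0] ⟶ X)
        = boxHomLeft (SSet.stdSimplex.map (SimplexCategory.δ (0 : Fin 3))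
            ≫ SSet.stdSimplex.map (SimplexCategory.δ (0 : Fin 4))) Δ[0]
          ≫ (τ : box Δ[3] Δ[0] ⟶ X)
      erw [← Functor.map_comp]
    have s3 : hSim (col 1 X)
        (fracV X μ₂ (boxHomLeft (coneSub 2).ι Δ[0]
          ≫ (boxHomLeft (SSet.stdSimplex.map (SimplexCategory.δ (0 : Fin 4))) Δ[0]
            ≫ (τ : box Δ[3] Δ[0] ⟶ X))))
        ((colδ 0 X).app (op (⦋0⦌ : SimplexCategory))
          (boxHomLeft (SSet.stdSimplex.map (SimplexCategory.δ (0 : Fin 4))) Δ[0]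
            ≫ (τ : box Δ[3] Δ[0] ⟶ X))) :=
      push_edge (colδ 0 X) e₀ he₀a he₀b
    have s4 : hSim (col 1 X) (fracV X μ₂ w₄)
        (fracV X μ₂ (boxHomLeft (coneSub 2).ι Δ[0]
          ≫ (boxHomLeft (SSet.stdSimplex.map (SimplexCategory.δ (0 : Fin 4))) Δ[0]
            ≫ (τ : box Δ[3] Δ[0] ⟶ X)))) := by
      have := push_edge (μ₂ ≫ colδ 0 X)
        ((pairMap _ _ hagree : (slash (coneSub 2).toFunctor X).obj (op ⦋1⦌))) hv1 hv0
      exact this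
    exact Relation.EqvGen.trans _ _ _
      (Relation.EqvGen.trans _ _ _ s1 (s2 ▸ Relation.EqvGen.refl _))
      (Relation.EqvGen.trans _ _ _ (Relation.EqvGen.symm _ _ s3) (Relation.EqvGen.symm _ _ s4))

end BousfieldPaper
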